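/- arXiv:1812.03309 — 5 statements merged into one kernel-verified Lean document; each statement's English description precedes it below -/
import Mathlib

section
/- Let n ≥ 1, p ≤ 0 and c > 0, and let B ⊂ ℝⁿ be an open ball. If w ∈ C²(B) ∩ C(B̄) is convex with w < 0 in B, w = 0 on ∂B, and det D²w(x) ≥ c (−w(x))^{p−1} for all x ∈ B, then sup_{x ∈ B} ‖∇w(x)‖ = ∞. -/
open MeasureTheory Metric Set Filter

/-- The Hessian matrix `(∂²w/∂xᵢ∂xⱼ(x))` of `w : ℝⁿ → ℝ` at `x`. -/
noncomputable def hess {n : ℕ} (u : EuclideanSpace ℝ (Fin n) → ℝ) (x : EuclideanSpace ℝ (Fin n)) :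
    Matrix (Fin n) (Fin n) ℝ :=
  fun i j => fderiv ℝ (fun y => fderiv ℝ u y (EuclideanSpace.single j 1)) x (EuclideanSpace.single i 1)

section Stmt6Aux

open InnerProductSpace Matrix Topology
open scoped ENNReal NNReal

noncomputable section
variable {n : ℕ}
local notation "E" => EuclideanSpace ℝ (Fin n)
local notation "⟪" x ", " y "⟫" => @inner ℝ _ _ x y

theorem fderiv_apply_eq_inner (w : E → ℝ) (y v : E) :
    fderiv ℝ w y v = ⟪gradient w y, v⟫ := by
  rw [show gradient w y = (toDual ℝ E).symm (fderiv ℝ w y) from rfl, toDual_symm_apply]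

theorem grad_contDiffOn {w : E → ℝ} {s : Set E} (hs : IsOpen s) (hw2 : ContDiffOn ℝ 2 w s) :
    ContDiffOn ℝ 1 (gradient w) s := by
  have h1 : ContDiffOn ℝ 1 (fderiv ℝ w) s := hw2.fderiv_of_isOpen hs (by norm_num)
  exact ((toDual ℝ E).symm.contDiff).comp_contDiffOn h1

theorem grad_hasFDerivAt {w : E → ℝ} {s : Set E} (hs : IsOpen s) (hw2 : ContDiffOn ℝ 2 w s)
    {x : E} (hx : x ∈ s) :
    HasFDerivAt (gradient w) (fderiv ℝ (gradient w) x) x :=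
  ((((grad_contDiffOn hs hw2).differentiableOn (by norm_num)) x hx).differentiableAt
    (hs.mem_nhds hx)).hasFDerivAt

theorem hess_apply_eq {w : E → ℝ} {s : Set E} (hs : IsOpen s) (hw2 : ContDiffOn ℝ 2 w s)
    {x : E} (hx : x ∈ s) (i j : Fin n) :
    hess w x i j = ⟪(EuclideanSpace.single j 1 : E),
      fderiv ℝ (gradient w) x (EuclideanSpace.single i 1)⟫ := by
  have hfun : (fun y => fderiv ℝ w y (EuclideanSpace.single j 1))
      = fun y => (innerSL ℝ (EuclideanSpace.single j 1 : E)) (gradient w y) := by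
    funext y
    rw [fderiv_apply_eq_inner, innerSL_apply_apply, real_inner_comm]
  have hcomp : HasFDerivAt (fun y => (innerSL ℝ (EuclideanSpace.single j 1 : E)) (gradient w y))
      ((innerSL ℝ (EuclideanSpace.single j 1 : E)).comp (fderiv ℝ (gradient w) x)) x :=
    (innerSL ℝ (EuclideanSpace.single j 1 : E)).hasFDerivAt.comp x (grad_hasFDerivAt hs hw2 hx)
  rw [hess, hfun, hcomp.fderiv]
  rfl

theorem hess_toMatrix {w : E → ℝ} {s : Set E} (hs : IsOpen s) (hw2 : ContDiffOn ℝ 2 w s)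
    {x : E} (hx : x ∈ s) :
    LinearMap.toMatrix (PiLp.basisFun 2 ℝ (Fin n)) (PiLp.basisFun 2 ℝ (Fin n))
      (fderiv ℝ (gradient w) x : E →ₗ[ℝ] E) = (hess w x)ᵀ := by
  classical
  ext i j
  rw [LinearMap.toMatrix_apply, Matrix.transpose_apply, hess_apply_eq hs hw2 hx]
  have hbj : (PiLp.basisFun 2 ℝ (Fin n)) j = EuclideanSpace.single j 1 :=
    PiLp.basisFun_apply _ _ _ _
  rw [hbj]
  have hrepr : ∀ (v : E), (PiLp.basisFun 2 ℝ (Fin n)).repr v i = v i := fun v =>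
    PiLp.basisFun_repr _ _ _ _ _
  rw [hrepr]
  simp [EuclideanSpace.inner_single_left]

theorem hess_det_eq {w : E → ℝ} {s : Set E} (hs : IsOpen s) (hw2 : ContDiffOn ℝ 2 w s)
    {x : E} (hx : x ∈ s) :
    (hess w x).det = (fderiv ℝ (gradient w) x).det := by
  have := LinearMap.det_toMatrix (PiLp.basisFun 2 ℝ (Fin n))
    (fderiv ℝ (gradient w) x : E →ₗ[ℝ] E)
  rw [ContinuousLinearMap.det, ← this, hess_toMatrix hs hw2 hx, Matrix.det_transpose]

theorem grad_line_mono {w : E → ℝ} {s : Set E} (hs : IsOpen s)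
    (hwconv : ConvexOn ℝ s w) (hw2 : ContDiffOn ℝ 2 w s) (a u : E) :
    MonotoneOn (fun t : ℝ => ⟪u, gradient w (t • u + a)⟫)
      ((fun t : ℝ => t • u + a) ⁻¹' s) := by
  have hwdiff : ∀ y ∈ s, DifferentiableAt ℝ w y := fun y hy =>
    ((hw2.differentiableOn (by norm_num)) y hy).differentiableAt (hs.mem_nhds hy)
  set L : ℝ → E := fun t => t • u + a with hL
  have hLaff : L = ⇑(AffineMap.lineMap a (a + u)) := by
    funext t; simp [hL, AffineMap.lineMap_apply]
  have hLd : ∀ t : ℝ, HasDerivAt L u t := fun t => by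
    simpa [hL] using ((hasDerivAt_id t).smul_const u).add_const a
  set S : Set ℝ := L ⁻¹' s with hS
  have hψconv : ConvexOn ℝ S (w ∘ L) := by
    have h := hwconv.comp_affineMap (AffineMap.lineMap a (a + u))
    rw [← hLaff] at h
    exact h
  have hψdiff : ∀ t ∈ S, HasDerivAt (w ∘ L) (fderiv ℝ w (L t) u) t := fun t ht =>
    ((hwdiff (L t) ht).hasFDerivAt).comp_hasDerivAt t (hLd t)
  have heq : Set.EqOn (deriv (w ∘ L)) (fun t : ℝ => ⟪u, gradient w (t • u + a)⟫) S := by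
    intro t ht
    rw [(hψdiff t ht).deriv]
    simp only []
    rw [fderiv_apply_eq_inner, real_inner_comm]
  exact (hψconv.monotoneOn_deriv (fun t ht => (hψdiff t ht).differentiableAt)).congr heq

theorem grad_line_hasDerivAt {w : E → ℝ} {s : Set E} (hs : IsOpen s)
    (hw2 : ContDiffOn ℝ 2 w s) (a u : E) {t₀ : ℝ} (ht₀ : t₀ • u + a ∈ s) :
    HasDerivAt (fun t : ℝ => ⟪u, gradient w (t • u + a)⟫)
      (⟪u, fderiv ℝ (gradient w) (t₀ • u + a) u⟫) t₀ := by
  set L : ℝ → E := fun t => t • u + a with hL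
  have hLd : HasDerivAt L u t₀ := by
    simpa [hL] using ((hasDerivAt_id t₀).smul_const u).add_const a
  have hc : HasFDerivAt (fun y => (innerSL ℝ u) (gradient w y))
      ((innerSL ℝ u).comp (fderiv ℝ (gradient w) (L t₀))) (L t₀) :=
    (innerSL ℝ u).hasFDerivAt.comp (L t₀) (grad_hasFDerivAt hs hw2 ht₀)
  exact hc.comp_hasDerivAt t₀ hLd

theorem psd {w : E → ℝ} {s : Set E} (hs : IsOpen s)
    (hwconv : ConvexOn ℝ s w) (hw2 : ContDiffOn ℝ 2 w s) {x : E} (hx : x ∈ s) (u : E) :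
    (0:ℝ) ≤ ⟪u, fderiv ℝ (gradient w) x u⟫ := by
  set φ : ℝ → ℝ := fun t => ⟪u, gradient w (t • u + x)⟫ with hφ
  set S : Set ℝ := (fun t : ℝ => t • u + x) ⁻¹' s with hS
  have hSopen : IsOpen S := hs.preimage (by fun_prop)
  have h0S : (0:ℝ) ∈ S := by simp [hS, mem_preimage, hx]
  have hmono : MonotoneOn φ S := grad_line_mono hs hwconv hw2 x u
  have hφd : HasDerivAt φ (⟪u, fderiv ℝ (gradient w) x u⟫) 0 := by
    have := grad_line_hasDerivAt hs hw2 x u (t₀ := 0) (by simpa using hx)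
    simpa only [zero_smul, zero_add] using this
  have hslope : ∀ᶠ t in 𝓝[>] (0:ℝ), 0 ≤ slope φ 0 t := by
    have hmem : S ∈ 𝓝[>] (0:ℝ) := nhdsWithin_le_nhds (hSopen.mem_nhds h0S)
    filter_upwards [hmem, self_mem_nhdsWithin] with t htS (ht : (0:ℝ) < t)
    have h1 := hmono h0S htS ht.le
    rw [slope_def_field]
    exact div_nonneg (by linarith) (by linarith)
  have htend : Tendsto (slope φ 0) (𝓝[>] (0:ℝ)) (𝓝 (⟪u, fderiv ℝ (gradient w) x u⟫)) :=
    (hasDerivAt_iff_tendsto_slope.1 hφd).mono_left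
      (nhdsWithin_mono _ (fun t ht => ne_of_gt ht))
  exact ge_of_tendsto htend hslope

theorem hessian_symm {w : E → ℝ} {s : Set E} (hs : IsOpen s) (hw2 : ContDiffOn ℝ 2 w s)
    {x : E} (hx : x ∈ s) (u v : E) :
    ⟪u, fderiv ℝ (gradient w) x v⟫ = ⟪v, fderiv ℝ (gradient w) x u⟫ := by
  have h1 : ContDiffOn ℝ 1 (fderiv ℝ w) s := hw2.fderiv_of_isOpen hs (by norm_num)
  have hf'd : HasFDerivAt (fderiv ℝ w) (fderiv ℝ (fderiv ℝ w) x) x :=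
    (((h1.differentiableOn (by norm_num)) x hx).differentiableAt (hs.mem_nhds hx)).hasFDerivAt
  set σ : StrongDual ℝ E ≃L[ℝ] E := (toDual ℝ E).symm.toContinuousLinearEquiv with hσ
  have hcomp : HasFDerivAt (gradient w)
      ((σ : StrongDual ℝ E →L[ℝ] E).comp (fderiv ℝ (fderiv ℝ w) x)) x := by
    have h := ((σ : StrongDual ℝ E →L[ℝ] E).hasFDerivAt (x := fderiv ℝ w x)).comp x hf'd
    have : (fun y => (σ : StrongDual ℝ E →L[ℝ] E) (fderiv ℝ w y)) = gradient w := by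
      funext y
      show σ (fderiv ℝ w y) = gradient w y
      rw [hσ, (toDual ℝ E).symm.coe_toContinuousLinearEquiv]
      rfl
    rwa [← this]
  have hH : fderiv ℝ (gradient w) x
      = (σ : StrongDual ℝ E →L[ℝ] E).comp (fderiv ℝ (fderiv ℝ w) x) := hcomp.fderiv
  have key : ∀ a b : E, ⟪a, fderiv ℝ (gradient w) x b⟫ = fderiv ℝ (fderiv ℝ w) x b a := by
    intro a b
    rw [hH]
    show ⟪a, σ ((fderiv ℝ (fderiv ℝ w) x) b)⟫ = _
    rw [real_inner_comm, hσ, (toDual ℝ E).symm.coe_toContinuousLinearEquiv, toDual_symm_apply]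
  have hsymm : IsSymmSndFDerivAt ℝ w x :=
    (hw2.contDiffAt (hs.mem_nhds hx)).isSymmSndFDerivAt (by simp [minSmoothness_of_isRCLikeNormedField])
  rw [key, key, hsymm v u]

theorem grad_injOn {w : E → ℝ} {s : Set E} (hs : IsOpen s) (hconv : Convex ℝ s)
    (hwconv : ConvexOn ℝ s w) (hw2 : ContDiffOn ℝ 2 w s)
    (hdet : ∀ x ∈ s, (hess w x).det ≠ 0) : InjOn (gradient w) s := by
  intro a ha b hb hab
  by_contra hne
  set v : E := b - a with hv
  have hv0 : v ≠ 0 := sub_ne_zero.2 (fun h => hne h.symm)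
  have hseg : ∀ t : ℝ, t ∈ Icc (0:ℝ) 1 → t • v + a ∈ s := by
    intro t ht
    have := hconv.add_smul_sub_mem ha hb ht
    rwa [add_comm] at this
  set φ : ℝ → ℝ := fun t => ⟪v, gradient w (t • v + a)⟫ with hφ
  have hmono : MonotoneOn φ ((fun t : ℝ => t • v + a) ⁻¹' s) := grad_line_mono hs hwconv hw2 a v
  have h01 : ∀ t : ℝ, t ∈ Icc (0:ℝ) 1 → t ∈ ((fun t : ℝ => t • v + a) ⁻¹' s) := fun t ht =>
    hseg t ht
  have hφ0 : φ 0 = φ 1 := by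
    have h0 : (0:ℝ) • v + a = a := by simp
    have h1 : (1:ℝ) • v + a = b := by simp [hv]
    rw [hφ]; simp only [h0, h1, hab]
  have hconst : ∀ t : ℝ, t ∈ Icc (0:ℝ) 1 → φ t = φ 0 := by
    intro t ht
    have l1 := hmono (h01 0 ⟨le_refl 0, zero_le_one⟩) (h01 t ht) ht.1
    have l2 := hmono (h01 t ht) (h01 1 ⟨zero_le_one, le_refl 1⟩) ht.2
    rw [hφ0]; linarith [hφ0]
  set x₀ : E := (1/2 : ℝ) • v + a with hx₀
  have hx₀s : x₀ ∈ s := hseg _ (by norm_num)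
  have hφd : HasDerivAt φ (⟪v, fderiv ℝ (gradient w) x₀ v⟫) (1/2) :=
    grad_line_hasDerivAt hs hw2 a v hx₀s
  have hev : φ =ᶠ[𝓝 (1/2 : ℝ)] fun _ => φ 0 := by
    filter_upwards [Ioo_mem_nhds (by norm_num : (0:ℝ) < 1/2) (by norm_num : (1/2:ℝ) < 1)]
      with t ht
    exact hconst t ⟨ht.1.le, ht.2.le⟩
  have hD0 : ⟪v, fderiv ℝ (gradient w) x₀ v⟫ = 0 := by
    have h2 : HasDerivAt (fun _ : ℝ => φ 0) (⟪v, fderiv ℝ (gradient w) x₀ v⟫) (1/2) :=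
      HasDerivAt.congr_of_eventuallyEq hφd hev.symm
    exact h2.unique (hasDerivAt_const _ _)
  -- Q is PSD symmetric bilinear, with Q v v = 0, hence H v = 0
  have hQsymm := hessian_symm hs hw2 hx₀s
  have hQpsd := fun u => psd hs hwconv hw2 hx₀s u
  have hHv : fderiv ℝ (gradient w) x₀ v = 0 := by
    have hzero : ∀ u : E, ⟪u, fderiv ℝ (gradient w) x₀ v⟫ = 0 := by
      intro u
      set A : ℝ := ⟪u, fderiv ℝ (gradient w) x₀ u⟫ with hA
      set B : ℝ := ⟪u, fderiv ℝ (gradient w) x₀ v⟫ with hB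
      have hAnn : 0 ≤ A := hQpsd u
      have hexp : ∀ t : ℝ, 0 ≤ t * t * A + 2 * t * B := by
        intro t
        have h := hQpsd (v + t • u)
        have hex : ⟪v + t • u, fderiv ℝ (gradient w) x₀ (v + t • u)⟫
            = ⟪v, fderiv ℝ (gradient w) x₀ v⟫ + t * ⟪v, fderiv ℝ (gradient w) x₀ u⟫
              + t * ⟪u, fderiv ℝ (gradient w) x₀ v⟫
              + t * t * ⟪u, fderiv ℝ (gradient w) x₀ u⟫ := by
          simp only [map_add, ContinuousLinearMap.map_smul, inner_add_left, inner_add_right,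
            real_inner_smul_left, real_inner_smul_right]
          ring
        rw [hex, hD0, hQsymm v u] at h
        rw [← hB] at h
        rw [← hA] at h
        linarith
      have h1 := hexp (-(B) / (A + 1))
      have hA1 : (0:ℝ) < A + 1 := by linarith
      have hBsq : B ^ 2 ≤ 0 := by
        have h2 : (-(B) / (A + 1)) * (-(B) / (A + 1)) * A + 2 * (-(B) / (A + 1)) * B
            = (B ^ 2 * A - 2 * B ^ 2 * (A + 1)) / (A + 1) ^ 2 := by
          field_simp
          ring
        rw [h2] at h1
        have h3 : 0 ≤ B ^ 2 * A - 2 * B ^ 2 * (A + 1) := by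
          have := (div_nonneg_iff.1 h1)
          rcases this with ⟨h, _⟩ | ⟨h, hneg⟩
          · exact h
          · nlinarith [sq_nonneg (A + 1)]
        nlinarith
      exact pow_eq_zero_iff (by norm_num : (2:ℕ) ≠ 0) |>.1 (le_antisymm hBsq (sq_nonneg B))
    have := hzero (fderiv ℝ (gradient w) x₀ v)
    rwa [real_inner_self_eq_norm_sq, pow_eq_zero_iff (by norm_num : (2:ℕ) ≠ 0),
      norm_eq_zero] at this
  -- determinant vanishes
  apply hdet x₀ hx₀s
  have hM := hess_toMatrix hs hw2 hx₀s
  set bb := PiLp.basisFun 2 ℝ (Fin n) with hbb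
  have hmv : (LinearMap.toMatrix bb bb (fderiv ℝ (gradient w) x₀ : E →ₗ[ℝ] E)) *ᵥ (bb.repr v)
      = bb.repr (fderiv ℝ (gradient w) x₀ v) :=
    LinearMap.toMatrix_mulVec_repr _ _ _ _
  rw [hHv] at hmv
  have hrv : ⇑(bb.repr v) ≠ 0 := by
    intro h
    apply hv0
    have h2 : bb.repr v = 0 := Finsupp.coe_eq_zero.1 h
    have := congrArg bb.repr.symm h2
    simpa using this
  have hdet0 : ((hess w x₀)ᵀ).det = 0 := by
    rw [← hM]
    exact (Matrix.exists_mulVec_eq_zero_iff).1 ⟨⇑(bb.repr v), hrv, by rw [hmv]; simp⟩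
  rwa [Matrix.det_transpose] at hdet0



theorem lip_closedBall {w : E → ℝ} {z : E} {r N : ℝ} (hr : 0 < r)
    (hw2 : ContDiffOn ℝ 2 w (ball z r)) (hwcont : ContinuousOn w (closedBall z r))
    (hb : ∀ x ∈ ball z r, ‖fderiv ℝ w x‖ ≤ N) :
    ∀ x ∈ closedBall z r, ∀ y ∈ closedBall z r, ‖w x - w y‖ ≤ N * ‖x - y‖ := by
  have hN0 : 0 ≤ N := le_trans (norm_nonneg _) (hb z (mem_ball_self hr))
  have hwdiff : ∀ x ∈ ball z r, DifferentiableAt ℝ w x := fun y hy =>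
    ((hw2.differentiableOn (by norm_num)) y hy).differentiableAt (isOpen_ball.mem_nhds hy)
  have hinner : ∀ x ∈ ball z r, ∀ y ∈ ball z r, ‖w x - w y‖ ≤ N * ‖x - y‖ := by
    intro x hx y hy
    exact Convex.norm_image_sub_le_of_norm_fderiv_le hwdiff hb (convex_ball z r) hy hx
  intro x hx y hy
  set u : ℝ → E := fun t => z + t • (x - z) with hu
  set v : ℝ → E := fun t => z + t • (y - z) with hvv
  have hmem : ∀ t ∈ Ico (0:ℝ) 1, ∀ (a : E), a ∈ closedBall z r → z + t • (a - z) ∈ ball z r := by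
    intro t ht a haz
    rw [mem_ball, dist_eq_norm]
    have : z + t • (a - z) - z = t • (a - z) := by abel
    rw [this, norm_smul, Real.norm_eq_abs, abs_of_nonneg ht.1]
    have h1 : ‖a - z‖ ≤ r := by rwa [mem_closedBall, dist_eq_norm] at haz
    calc t * ‖a - z‖ ≤ t * r := by
          exact mul_le_mul_of_nonneg_left h1 ht.1
      _ < 1 * r := by
          apply mul_lt_mul_of_pos_right ht.2 hr
      _ = r := one_mul r
  have hbd : ∀ t ∈ Ico (0:ℝ) 1, ‖w (u t) - w (v t)‖ ≤ N * ‖x - y‖ := by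
    intro t ht
    have h1 := hinner (u t) (hmem t ht x hx) (v t) (hmem t ht y hy)
    have h2 : u t - v t = t • (x - y) := by
      simp only [hu, hvv]
      rw [show z + t • (x - z) - (z + t • (y - z)) = t • (x - z) - t • (y - z) by abel,
        ← smul_sub]
      congr 1; abel
    rw [h2, norm_smul, Real.norm_of_nonneg ht.1] at h1
    calc ‖w (u t) - w (v t)‖ ≤ N * (t * ‖x - y‖) := h1
      _ ≤ N * (1 * ‖x - y‖) := by
          apply mul_le_mul_of_nonneg_left _ hN0
          exact mul_le_mul_of_nonneg_right ht.2.le (norm_nonneg _)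
      _ = N * ‖x - y‖ := by rw [one_mul]
  -- pass to the limit t → 1⁻
  have hmapsu : ∀ t ∈ Icc (0:ℝ) 1, u t ∈ closedBall z r := by
    intro t ht
    rw [mem_closedBall, dist_eq_norm, show z + t • (x - z) - z = t • (x - z) by abel,
      norm_smul, Real.norm_eq_abs, abs_of_nonneg ht.1]
    have h1 : ‖x - z‖ ≤ r := by rwa [mem_closedBall, dist_eq_norm] at hx
    calc t * ‖x - z‖ ≤ 1 * r := by
          apply mul_le_mul ht.2 h1 (norm_nonneg _) zero_le_one
      _ = r := one_mul r
  have hmapsv : ∀ t ∈ Icc (0:ℝ) 1, v t ∈ closedBall z r := by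
    intro t ht
    rw [mem_closedBall, dist_eq_norm, show z + t • (y - z) - z = t • (y - z) by abel,
      norm_smul, Real.norm_eq_abs, abs_of_nonneg ht.1]
    have h1 : ‖y - z‖ ≤ r := by rwa [mem_closedBall, dist_eq_norm] at hy
    calc t * ‖y - z‖ ≤ 1 * r := by
          apply mul_le_mul ht.2 h1 (norm_nonneg _) zero_le_one
      _ = r := one_mul r
  have hucont : ContinuousOn (w ∘ u) (Icc 0 1) :=
    hwcont.comp (by fun_prop) hmapsu
  have hvcont : ContinuousOn (w ∘ v) (Icc 0 1) :=
    hwcont.comp (by fun_prop) hmapsv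
  have hgcont : ContinuousWithinAt (fun t => ‖w (u t) - w (v t)‖) (Icc 0 1) 1 := by
    have h1 : ContinuousWithinAt (w ∘ u) (Icc 0 1) 1 := hucont 1 (by norm_num)
    have h2 : ContinuousWithinAt (w ∘ v) (Icc 0 1) 1 := hvcont 1 (by norm_num)
    exact (h1.sub h2).norm
  have hne : (𝓝[Ico (0:ℝ) 1] 1).NeBot := by
    apply mem_closure_iff_nhdsWithin_neBot.1
    rw [closure_Ico (by norm_num : (0:ℝ) ≠ 1)]
    exact ⟨zero_le_one, le_refl 1⟩
  have htends : Tendsto (fun t => ‖w (u t) - w (v t)‖) (𝓝[Ico (0:ℝ) 1] 1)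
      (𝓝 ‖w x - w y‖) := by
    have h1 : u 1 = x := by simp [hu]
    have h2 : v 1 = y := by simp [hvv]
    have := hgcont.tendsto.mono_left (nhdsWithin_mono _ Ico_subset_Icc_self)
    rwa [h1, h2] at this
  exact le_of_tendsto htends (eventually_nhdsWithin_of_forall hbd)

theorem exists_boundary_pt (hn : 1 ≤ n) {z : E} {r : ℝ} (hr : 0 < r) {x : E}
    (hx : x ∈ ball z r) : ∃ b : E, b ∈ sphere z r ∧ ‖b - x‖ = r - dist x z := by
  by_cases hxz : x = z
  · refine ⟨z + r • (EuclideanSpace.single (⟨0, hn⟩ : Fin n) (1:ℝ)), ?_, ?_⟩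
    · rw [mem_sphere, dist_eq_norm]
      simp [norm_smul, abs_of_pos hr, EuclideanSpace.norm_single]
    · subst hxz
      simp [norm_smul, abs_of_pos hr, EuclideanSpace.norm_single]
  · set d : ℝ := ‖x - z‖ with hd
    have hd0 : 0 < d := by
      rw [hd, norm_pos_iff]
      exact sub_ne_zero.2 hxz
    have hdr : d < r := by rwa [mem_ball, dist_eq_norm] at hx
    refine ⟨z + (r / d) • (x - z), ?_, ?_⟩
    · rw [mem_sphere, dist_eq_norm]
      rw [show z + (r / d) • (x - z) - z = (r / d) • (x - z) by abel, norm_smul,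
        Real.norm_of_nonneg (by positivity), ← hd, div_mul_cancel₀ r (ne_of_gt hd0)]
    · rw [show z + (r / d) • (x - z) - x = (r / d - 1) • (x - z) by
        rw [sub_smul, one_smul]; abel, norm_smul,
        Real.norm_of_nonneg (by rw [sub_nonneg]; exact (one_le_div hd0).2 hdr.le), ← hd,
        dist_eq_norm, ← hd]
      field_simp

theorem neg_w_le {w : E → ℝ} {z : E} {r N : ℝ} (hn : 1 ≤ n) (hr : 0 < r)
    (hw2 : ContDiffOn ℝ 2 w (ball z r)) (hwcont : ContinuousOn w (closedBall z r))
    (hw0 : ∀ x ∈ sphere z r, w x = 0)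
    (hb : ∀ x ∈ ball z r, ‖fderiv ℝ w x‖ ≤ N) :
    ∀ x ∈ ball z r, -w x ≤ N * (r - dist x z) := by
  intro x hx
  obtain ⟨b, hbs, hbd⟩ := exists_boundary_pt hn hr hx
  have hlip := lip_closedBall hr hw2 hwcont hb b (sphere_subset_closedBall hbs) x
    (ball_subset_closedBall hx)
  rw [hw0 b hbs, zero_sub, norm_neg, hbd] at hlip
  rw [Real.norm_eq_abs] at hlip
  exact le_trans (neg_le_abs _) hlip


theorem pow_ineq {a b q : ℝ} (ha : 0 ≤ a) (hb : 0 ≤ b) (hba : b ≤ a) (hq : 0 ≤ q)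
    (hqb : q ≤ b) {n : ℕ} (hn : 1 ≤ n) : (a - b) * q ^ (n - 1) + b ^ n ≤ a ^ n := by
  obtain ⟨m, rfl⟩ : ∃ m, n = m + 1 := ⟨n - 1, (Nat.succ_pred_eq_of_pos hn).symm⟩
  simp only [Nat.add_sub_cancel]
  have h1 : b ^ m ≤ a ^ m := pow_le_pow_left₀ hb hba m
  have h2 : q ^ m ≤ b ^ m := pow_le_pow_left₀ hq hqb m
  have h3 : 0 ≤ a * (a ^ m - b ^ m) := mul_nonneg ha (sub_nonneg.2 h1)
  have h4 : 0 ≤ (a - b) * (b ^ m - q ^ m) := mul_nonneg (sub_nonneg.2 hba) (sub_nonneg.2 h2)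
  rw [pow_succ, pow_succ]
  nlinarith

/-- for `p ≤ 0` and `c > 0`, a convex function on a ball, negative inside,
vanishing on the boundary, with `det D²w ≥ c (-w)^{p-1}`, has unbounded gradient. -/
theorem stmt6 (n : ℕ) (hn : 1 ≤ n) (p : ℝ) (hp : p ≤ 0) (c : ℝ) (hc : 0 < c)
    (z : EuclideanSpace ℝ (Fin n)) (r : ℝ) (hr : 0 < r)
    (w : EuclideanSpace ℝ (Fin n) → ℝ)
    (hwconv : ConvexOn ℝ (closedBall z r) w) (hw2 : ContDiffOn ℝ 2 w (ball z r))
    (hwcont : ContinuousOn w (closedBall z r))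
    (hwneg : ∀ x ∈ ball z r, w x < 0) (hw0 : ∀ x ∈ sphere z r, w x = 0)
    (hpde : ∀ x ∈ ball z r, c * (-w x) ^ (p - 1) ≤ (hess w x).det) :
    ∀ N : ℝ, ∃ x ∈ ball z r, N < ‖gradient w x‖ := by
  intro N
  by_contra hcon
  push_neg at hcon
  haveI hnt : Nontrivial (EuclideanSpace ℝ (Fin n)) := by
    refine ⟨⟨0, EuclideanSpace.single (⟨0, hn⟩ : Fin n) (1:ℝ), fun h => ?_⟩⟩
    have : (0 : EuclideanSpace ℝ (Fin n)) ⟨0, hn⟩ = EuclideanSpace.single (⟨0, hn⟩ : Fin n) (1:ℝ) ⟨0, hn⟩ := by rw [h]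
    rw [EuclideanSpace.single_apply] at this
    simp at this
  have hballconv : ConvexOn ℝ (ball z r) w := hwconv.subset ball_subset_closedBall (convex_ball z r)
  have hbf : ∀ x ∈ ball z r, ‖fderiv ℝ w x‖ ≤ N := by
    intro x hx
    have hh : ‖gradient w x‖ = ‖fderiv ℝ w x‖ := by
      rw [show gradient w x = (toDual ℝ (EuclideanSpace ℝ (Fin n))).symm (fderiv ℝ w x) from rfl]
      exact LinearIsometryEquiv.norm_map _ _
    rw [← hh]; exact hcon x hx
  have hwle := neg_w_le hn hr hw2 hwcont hw0 hbf
  have hzball : z ∈ ball z r := mem_ball_self hr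
  have hN : 0 < N := by
    have h1 := hwle z hzball
    have h2 : 0 < -w z := by linarith [hwneg z hzball]
    rw [dist_self, sub_zero] at h1
    nlinarith
  have hdetpos : ∀ x ∈ ball z r, 0 < (hess w x).det := fun x hx =>
    lt_of_lt_of_le (mul_pos hc (Real.rpow_pos_of_pos (by linarith [hwneg x hx]) _)) (hpde x hx)
  have hinj : InjOn (gradient w) (ball z r) :=
    grad_injOn isOpen_ball (convex_ball z r) hballconv hw2
      (fun x hx => ne_of_gt (hdetpos x hx))
  have hfd : ∀ x ∈ ball z r,
      HasFDerivWithinAt (gradient w) (fderiv ℝ (gradient w) x) (ball z r) x := fun x hx =>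
    (grad_hasFDerivAt isOpen_ball hw2 hx).hasFDerivWithinAt
  have himg : gradient w '' (ball z r) ⊆ closedBall 0 N := by
    rintro _ ⟨x, hx, rfl⟩
    exact mem_closedBall_zero_iff.2 (hcon x hx)
  have hupper : (∫⁻ x in ball z r, ENNReal.ofReal (c * (-w x) ^ (p - 1)) ∂volume)
      ≤ volume (closedBall (0 : EuclideanSpace ℝ (Fin n)) N) := by
    calc (∫⁻ x in ball z r, ENNReal.ofReal (c * (-w x) ^ (p - 1)) ∂volume)
        ≤ ∫⁻ x in ball z r, ENNReal.ofReal |(fderiv ℝ (gradient w) x).det| ∂volume := by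
          refine setLIntegral_mono' measurableSet_ball (fun x hx => ENNReal.ofReal_le_ofReal ?_)
          refine le_trans (le_trans (hpde x hx) ?_) (le_abs_self _)
          exact le_of_eq (hess_det_eq isOpen_ball hw2 hx)
      _ = volume (gradient w '' (ball z r)) :=
          lintegral_abs_det_fderiv_eq_addHaar_image volume measurableSet_ball hfd hinj
      _ ≤ volume (closedBall 0 N) := measure_mono himg
  have hfin : volume (closedBall (0 : EuclideanSpace ℝ (Fin n)) N) < ⊤ := measure_closedBall_lt_top
  -- shells
  set e : ℕ → ℝ := fun k => (2:ℝ) ^ (-(k:ℝ) - 1) with he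
  set t : ℕ → ℝ := fun k => r - r * e k with ht
  have hepos : ∀ k, 0 < e k := fun k => Real.rpow_pos_of_pos two_pos _
  have hehalf : ∀ k, e k ≤ 1/2 := by
    intro k
    rw [he]
    calc (2:ℝ) ^ (-(k:ℝ) - 1) ≤ (2:ℝ) ^ (-1 : ℝ) :=
          Real.rpow_le_rpow_of_exponent_le one_le_two (by have h0 : (0:ℝ) ≤ (k:ℝ) := Nat.cast_nonneg k; linarith)
      _ = 1/2 := by rw [Real.rpow_neg_one]; norm_num
  have hesucc : ∀ k, e (k+1) = e k / 2 := by
    intro k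
    rw [he]
    simp only []
    push_cast
    rw [show -((k:ℝ)+1) - 1 = (-(k:ℝ) - 1) + (-1) by ring, Real.rpow_add two_pos,
      Real.rpow_neg_one]
    ring
  have htpos : ∀ k, r/2 ≤ t k := by
    intro k
    rw [ht]
    simp only []
    nlinarith [hehalf k, hepos k]
  have htlt : ∀ k, t k < r := by
    intro k
    rw [ht]; simp only []
    nlinarith [hepos k]
  have htsucc : ∀ k, t (k+1) - t k = r * e k / 2 := by
    intro k
    rw [ht]; simp only [hesucc k]; ring
  clear_value e t
  have htmono : StrictMono t := strictMono_nat_of_lt_succ (fun k => by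
    have h1 : t (k+1) - t k = r * e k / 2 := htsucc k
    have h2 : 0 < r * e k := mul_pos hr (hepos k)
    linarith)
  set S : ℕ → Set (EuclideanSpace ℝ (Fin n)) := fun k => ball z (t (k+1)) \ ball z (t k) with hS
  have hSsub : ∀ k, S k ⊆ ball z r := fun k =>
    diff_subset.trans (ball_subset_ball (htlt (k+1)).le)
  have hSmeas : ∀ k, MeasurableSet (S k) := fun k => measurableSet_ball.diff measurableSet_ball
  have hSdisj : Pairwise (Function.onFun Disjoint S) := by
    have hd : ∀ i j, i < j → Disjoint (S i) (S j) := by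
      intro i j hij
      refine Set.disjoint_left.2 (fun a hai haj => haj.2 ?_)
      exact ball_subset_ball (htmono.monotone hij) hai.1
    intro i j hij
    rcases hij.lt_or_gt with h | h
    · exact hd i j h
    · exact (hd j i h).symm
  have hμ1pos : 0 < volume (ball (0 : EuclideanSpace ℝ (Fin n)) 1) :=
    measure_ball_pos _ _ one_pos
  have hvol : ∀ k, ENNReal.ofReal ((t (k+1) - t k) * (r/2)^(n-1))
      * volume (ball (0 : EuclideanSpace ℝ (Fin n)) 1) ≤ volume (S k) := by
    intro k
    have hr2 : (0:ℝ) ≤ r/2 := by linarith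
    have htk0 : 0 ≤ t k := le_trans hr2 (htpos k)
    have htk1 : 0 ≤ t (k+1) := le_trans hr2 (htpos (k+1))
    have hdiff0 : 0 ≤ t (k+1) - t k := sub_nonneg.2 (htmono (Nat.lt_succ_self k)).le
    have hdiffeq : volume (S k) = volume (ball z (t (k+1))) - volume (ball z (t k)) :=
      measure_diff (ball_subset_ball (htmono (Nat.lt_succ_self k)).le)
        measurableSet_ball.nullMeasurableSet measure_ball_lt_top.ne
    rw [hdiffeq, Measure.addHaar_ball _ _ htk1,
      Measure.addHaar_ball _ _ htk0, finrank_euclideanSpace_fin]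
    refine ENNReal.le_sub_of_add_le_right
      (ENNReal.mul_lt_top ENNReal.ofReal_lt_top measure_ball_lt_top).ne ?_
    rw [← add_mul, ← ENNReal.ofReal_add (mul_nonneg hdiff0 (pow_nonneg hr2 _))
      (pow_nonneg htk0 _)]
    refine mul_le_mul_of_nonneg_right (ENNReal.ofReal_le_ofReal ?_) zero_le
    exact pow_ineq (le_trans htk0 (htmono (Nat.lt_succ_self k)).le) htk0
      (htmono (Nat.lt_succ_self k)).le hr2 (htpos k) hn
  set C₀ : ℝ := c * (N*r)^(p-1) * ((r/2) * (r/2)^(n-1)) with hC₀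
  have hC₀pos : 0 < C₀ := by
    rw [hC₀]
    have h1 := Real.rpow_pos_of_pos (mul_pos hN hr) (p-1)
    have h2 : (0:ℝ) < r/2 := by linarith
    exact mul_pos (mul_pos hc h1) (mul_pos h2 (pow_pos h2 _))
  have hshell : ∀ k, ENNReal.ofReal C₀ * volume (ball (0 : EuclideanSpace ℝ (Fin n)) 1)
      ≤ ∫⁻ x in S k, ENNReal.ofReal (c * (-w x) ^ (p - 1)) ∂volume := by
    intro k
    have hpt : ∀ x ∈ S k, ENNReal.ofReal (c * (N*(r * e k))^(p-1))
        ≤ ENNReal.ofReal (c * (-w x) ^ (p - 1)) := by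
      intro x hx
      have hxball : x ∈ ball z r := hSsub k hx
      have h1 : 0 < -w x := by linarith [hwneg x hxball]
      have h2 : r - dist x z ≤ r * e k := by
        have h3 : t k ≤ dist x z := not_lt.1 (fun h => hx.2 (mem_ball.2 h))
        rw [ht] at h3
        simp only [] at h3
        linarith
      have h3 : -w x ≤ N * (r * e k) :=
        le_trans (hwle x hxball) (mul_le_mul_of_nonneg_left h2 hN.le)
      apply ENNReal.ofReal_le_ofReal
      exact mul_le_mul_of_nonneg_left
        (Real.rpow_le_rpow_of_nonpos h1 h3 (by linarith)) hc.le
    have hreal : C₀ ≤ c * (N*(r * e k))^(p-1) * ((t (k+1) - t k) * (r/2)^(n-1)) := by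
      have hek := hepos k
      have he1 : e k ≤ 1 := le_trans (hehalf k) (by norm_num)
      have hep : (1:ℝ) ≤ e k ^ p := by
        have := Real.rpow_le_rpow_of_exponent_ge hek he1 hp
        rwa [Real.rpow_zero] at this
      have hsplit : (N*(r * e k))^(p-1) = (N*r)^(p-1) * (e k)^(p-1) := by
        rw [show N*(r*e k) = (N*r) * e k by ring]
        exact Real.mul_rpow (mul_pos hN hr).le hek.le
      rw [htsucc k, hsplit]
      have hepow : (e k)^(p-1) * (e k) = e k ^ p := by
        rw [← Real.rpow_add_one hek.ne' (p-1)]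
        ring_nf
      calc C₀ = C₀ * 1 := (mul_one _).symm
        _ ≤ C₀ * (e k ^ p) := by
            apply mul_le_mul_of_nonneg_left hep hC₀pos.le
        _ = c * ((N*r)^(p-1) * (e k)^(p-1)) * (r * e k / 2 * (r/2)^(n-1)) := by
            rw [hC₀, ← hepow]; ring
    calc ENNReal.ofReal C₀ * volume (ball (0 : EuclideanSpace ℝ (Fin n)) 1)
        ≤ ENNReal.ofReal (c * (N*(r * e k))^(p-1) * ((t (k+1) - t k) * (r/2)^(n-1)))
            * volume (ball (0 : EuclideanSpace ℝ (Fin n)) 1) :=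
          mul_le_mul_of_nonneg_right (ENNReal.ofReal_le_ofReal hreal) zero_le
      _ = ENNReal.ofReal (c * (N*(r * e k))^(p-1))
            * (ENNReal.ofReal ((t (k+1) - t k) * (r/2)^(n-1))
              * volume (ball (0 : EuclideanSpace ℝ (Fin n)) 1)) := by
          rw [ENNReal.ofReal_mul (mul_nonneg hc.le (Real.rpow_nonneg
            (mul_pos hN (mul_pos hr (hepos k))).le _)), mul_assoc]
      _ ≤ ENNReal.ofReal (c * (N*(r * e k))^(p-1)) * volume (S k) :=
          mul_le_mul_of_nonneg_left (hvol k) zero_le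
      _ = ∫⁻ _ in S k, ENNReal.ofReal (c * (N*(r * e k))^(p-1)) ∂volume := by
          rw [setLIntegral_const]
      _ ≤ ∫⁻ x in S k, ENNReal.ofReal (c * (-w x) ^ (p - 1)) ∂volume :=
          setLIntegral_mono' (hSmeas k) hpt
  have htop : (⊤ : ℝ≥0∞) ≤ ∫⁻ x in ball z r, ENNReal.ofReal (c * (-w x) ^ (p - 1)) ∂volume := by
    have hne : ENNReal.ofReal C₀ * volume (ball (0 : EuclideanSpace ℝ (Fin n)) 1) ≠ 0 :=
      mul_ne_zero (ENNReal.ofReal_pos.2 hC₀pos).ne' hμ1pos.ne'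
    calc (⊤ : ℝ≥0∞)
        = ∑' (_ : ℕ), ENNReal.ofReal C₀ * volume (ball (0 : EuclideanSpace ℝ (Fin n)) 1) :=
          (ENNReal.tsum_const_eq_top_of_ne_zero hne).symm
      _ ≤ ∑' k, ∫⁻ x in S k, ENNReal.ofReal (c * (-w x) ^ (p - 1)) ∂volume :=
          ENNReal.tsum_le_tsum hshell
      _ = ∫⁻ x in ⋃ k, S k, ENNReal.ofReal (c * (-w x) ^ (p - 1)) ∂volume :=
          (lintegral_iUnion hSmeas hSdisj _).symm
      _ ≤ ∫⁻ x in ball z r, ENNReal.ofReal (c * (-w x) ^ (p - 1)) ∂volume :=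
          lintegral_mono_set (iUnion_subset hSsub)
  exact absurd (le_trans htop hupper) (not_le.2 hfin)

end
end Stmt6Aux
end

section
/- Let n ≥ 1, 0 < p < 1, K > 0 and R̄ > 0. Let Ω ⊂ ℝⁿ be a bounded open convex set satisfying a uniform enclosing sphere condition with radius K, i.e., for every x₀ ∈ ∂Ω there exists z ∈ ℝⁿ with Ω ⊆ B(z, K) and ‖x₀ − z‖ = K. Let R : Ω → ℝ satisfy 0 ≤ R(x) ≤ R̄ for all x ∈ Ω. Then there exists a constant C, depending only on n, p, R̄ and K, such that every convex function u ∈ C²(Ω) ∩ C(Ω̄) with u < 0 in Ω, u = 0 on ∂Ω and det D²u(x) = R(x)(−u(x))^{p−1} in Ω satisfies sup_{x ∈ Ω} ‖∇u(x)‖ ≤ C. -/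
set_option maxHeartbeats 4000000


open MeasureTheory Metric Set Filter

section AuxLemmas
open Matrix

lemma sd_test {g g' : ℝ → ℝ} {c : ℝ} (hmin : IsLocalMin g 0)
    (hg : ∀ᶠ t in nhds (0:ℝ), HasDerivAt g (g' t) t) (hg' : HasDerivAt g' c 0) : 0 ≤ c := by
  by_contra hc
  push_neg at hc
  have hg'0 : g' 0 = 0 := hmin.hasDerivAt_eq_zero hg.self_of_nhds
  -- slope of g' tends to c
  have hslope : Tendsto (slope g' 0) (nhdsWithin 0 {(0:ℝ)}ᶜ) (nhds c) :=
    hasDerivAt_iff_tendsto_slope.mp hg'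
  have hev : ∀ᶠ t in nhdsWithin (0:ℝ) (Ioi 0), g' t < 0 := by
    have h1 : Tendsto (slope g' 0) (nhdsWithin 0 (Ioi 0)) (nhds c) :=
      hslope.mono_left (nhdsWithin_mono _ (by intro t ht; simp at ht ⊢; linarith [ht.ne']))
    have h2 : ∀ᶠ t in nhdsWithin (0:ℝ) (Ioi 0), slope g' 0 t < c / 2 :=
      h1.eventually_lt_const (by linarith)
    filter_upwards [h2, self_mem_nhdsWithin] with t ht ht0
    rw [mem_Ioi] at ht0
    have : slope g' 0 t = g' t / t := by simp [slope_def_field, hg'0]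
    rw [this] at ht
    have := (div_lt_iff₀ ht0).mp ht
    nlinarith
  -- extract δ
  rw [eventually_nhdsWithin_iff] at hev
  obtain ⟨δ1, hδ1, hd1⟩ := Metric.eventually_nhds_iff.mp hev
  obtain ⟨δ2, hδ2, hd2⟩ := Metric.eventually_nhds_iff.mp hg
  obtain ⟨δ3, hδ3, hd3⟩ := Metric.eventually_nhds_iff.mp hmin
  set δ := min δ1 (min δ2 δ3) / 2 with hδdef
  have hδpos : 0 < δ := by positivity
  have hδ1' : δ < δ1 := by have := min_le_left δ1 (min δ2 δ3); simp [hδdef]; linarith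
  have hδ2' : δ < δ2 := by have h := (min_le_right δ1 (min δ2 δ3)).trans (min_le_left δ2 δ3); simp [hδdef]; linarith
  have hδ3' : δ < δ3 := by have h := (min_le_right δ1 (min δ2 δ3)).trans (min_le_right δ2 δ3); simp [hδdef]; linarith
  -- g strictly decreasing on [0, δ]
  have hanti : StrictAntiOn g (Icc 0 δ) := by
    apply strictAntiOn_of_deriv_neg (convex_Icc 0 δ)
    · intro t ht
      have : dist t 0 < δ2 := by
        rcases ht with ⟨h0, h1⟩
        rw [Real.dist_eq, sub_zero, abs_of_nonneg h0]; linarith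
      exact (hd2 this).continuousAt.continuousWithinAt
    · intro t ht
      rw [interior_Icc] at ht
      rcases ht with ⟨h0, h1⟩
      have hdist : dist t 0 < δ2 := by rw [Real.dist_eq, sub_zero, abs_of_nonneg h0.le]; linarith
      rw [(hd2 hdist).deriv]
      exact hd1 (by rw [Real.dist_eq, sub_zero, abs_of_nonneg h0.le]; linarith) (mem_Ioi.mpr h0)
  have : g δ < g 0 := hanti (by constructor <;> [rfl; exact hδpos.le]) (by constructor <;> [exact hδpos.le; rfl]) hδpos
  have : g 0 ≤ g δ := hd3 (by rw [Real.dist_eq, sub_zero, abs_of_nonneg hδpos.le]; linarith)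
  linarith

lemma one_le_det_of_sub_one {N : Type*} [Fintype N] [DecidableEq N]
    {C : Matrix N N ℝ} (hC : C.IsHermitian) (h : (C - 1).PosSemidef) : 1 ≤ C.det := by
  have hev : ∀ i, 1 ≤ hC.eigenvalues i := by
    intro i
    set v : EuclideanSpace ℝ N := hC.eigenvectorBasis i with hv
    have hnorm : ‖v‖ = 1 := hC.eigenvectorBasis.orthonormal.1 i
    have hvv : dotProduct (star (⇑v)) (⇑v) = 1 := by
      have h1 : (inner ℝ v v : ℝ) = dotProduct (star (WithLp.equiv _ _ v)) (WithLp.equiv _ _ v) := by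
        rw [EuclideanSpace.inner_eq_star_dotProduct, dotProduct_comm]; rfl
      have h2 : (inner ℝ v v : ℝ) = ‖v‖ ^ 2 := real_inner_self_eq_norm_sq v
      rw [hnorm] at h2
      rw [h2] at h1
      simpa using h1.symm
    have hmul : C *ᵥ ⇑v = hC.eigenvalues i • ⇑v := hC.mulVec_eigenvectorBasis i
    have hpsd := h.dotProduct_mulVec_nonneg (⇑v)
    rw [Matrix.sub_mulVec, dotProduct_sub, hmul, Matrix.one_mulVec,
      dotProduct_smul, hvv] at hpsd
    simp at hpsd
    linarith
  rw [hC.det_eq_prod_eigenvalues]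
  calc (1:ℝ) = ∏ _i : N, 1 := by simp
  _ ≤ ∏ i, hC.eigenvalues i := Finset.prod_le_prod (fun i _ => by norm_num) fun i _ => hev i

open scoped MatrixOrder in
lemma det_le_det_of_sub_posSemidef {N : Type*} [Fintype N] [DecidableEq N] {A B : Matrix N N ℝ}
    (hA : A.PosDef) (hBA : (B - A).PosSemidef) : A.det ≤ B.det := by
  have hS : (CFC.sqrt A).PosSemidef := (CFC.sqrt_nonneg A).posSemidef
  set S := CFC.sqrt A with hSdef
  have hSmul : S * S = A := CFC.sqrt_mul_sqrt_self A hA.posSemidef.nonneg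
  have hdS : S.det * S.det = A.det := by rw [← det_mul, hSmul]
  have hAdet : 0 < A.det := hA.det_pos
  have hSdet : S.det ≠ 0 := by
    intro h0; rw [h0, mul_zero] at hdS; linarith
  have hSunit : IsUnit S.det := hSdet.isUnit
  set T := S⁻¹ with hTdef
  have hTS : T * S = 1 := nonsing_inv_mul _ hSunit
  have hST : S * T = 1 := mul_nonsing_inv _ hSunit
  have hTherm : T.IsHermitian := hS.isHermitian.inv
  have hBherm : B.IsHermitian := by
    have := hBA.isHermitian.add hA.isHermitian
    simpa using this
  set C := T * B * T with hCdef
  have hCherm : C.IsHermitian := by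
    have := Matrix.isHermitian_conjTranspose_mul_mul T hBherm
    rwa [hTherm.eq] at this
  have hTAT : T * A * T = 1 := by
    rw [← hSmul, ← Matrix.mul_assoc, Matrix.mul_assoc (T * S), hST, Matrix.mul_one, hTS]
  have h1 : C - 1 = T * (B - A) * T := by
    rw [Matrix.mul_sub, Matrix.sub_mul, hCdef, hTAT]
  have hC1 : (C - 1).PosSemidef := by
    rw [h1]
    have := hBA.conjTranspose_mul_mul_same T
    rwa [hTherm.eq] at this
  have hdetC : 1 ≤ C.det := one_le_det_of_sub_one hCherm hC1
  have hdetC2 : C.det = T.det * B.det * T.det := by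
    rw [hCdef, det_mul, det_mul]
  have hdT : T.det * S.det = 1 := by
    rw [hTdef, ← det_mul, nonsing_inv_mul _ hSunit, det_one]
  have key : T.det * T.det * A.det = 1 := by
    have : T.det * T.det * A.det = (T.det * S.det) * (T.det * S.det) := by
      rw [← hdS]; ring
    rw [this, hdT, mul_one]
  have hBC : B.det = C.det * A.det := by
    rw [hdetC2]
    linear_combination (-B.det) * key
  nlinarith

section Barrier

variable {n : ℕ}

lemma barrier (hn : 1 ≤ n) (p K Rbar a b : ℝ) (hp0 : 0 < p) (hp1 : p < 1) (hK : 0 < K)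
    (hRbar : 0 < Rbar) (ha1 : 1 ≤ a) (hb : 0 < b)
    (hab : 4*b*(K^2)^p ≤ a)
    (hacond : Rbar * (a*(K^2/4)) ^ (p-1) ≤ a^n)
    (hbcond : Rbar * (a/2)^(p-1) ≤ a^(n-1) * (2*K^2) * (b*(p+1)*p))
    (Ω : Set (EuclideanSpace ℝ (Fin n))) (hopen : IsOpen Ω) (hbdd : Bornology.IsBounded Ω)
    (z : EuclideanSpace ℝ (Fin n)) (hball : Ω ⊆ Metric.ball z K)
    (R u : EuclideanSpace ℝ (Fin n) → ℝ)
    (hR : ∀ x ∈ Ω, 0 ≤ R x ∧ R x ≤ Rbar)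
    (hu2 : ContDiffOn ℝ 2 u Ω) (hucont : ContinuousOn u (closure Ω))
    (hubd : ∀ x ∈ frontier Ω, u x = 0)
    (hMA : ∀ x ∈ Ω, (hess u x).det = R x * (-u x) ^ (p - 1)) :
    ∀ x ∈ Ω, -u x ≤ a * (K^2 - ‖x - z‖^2) := by
  have hp1' : (0:ℝ) < p + 1 := by linarith
  have ha0 : (0:ℝ) < a := by linarith
  -- the barrier function
  set w : EuclideanSpace ℝ (Fin n) → ℝ :=
    fun y => -(a * (K^2 - ‖y - z‖^2)) + b * (K^2 - ‖y - z‖^2)^(p+1) with hwdef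
  have hwcont : Continuous w := by
    have hbase : Continuous fun y : EuclideanSpace ℝ (Fin n) => K^2 - ‖y - z‖^2 := by
      fun_prop
    exact ((continuous_const.mul hbase).neg).add
      (continuous_const.mul (hbase.rpow_const fun y => Or.inr (by linarith)))
  -- closure is inside the closed ball
  have hclos : closure Ω ⊆ Metric.closedBall z K :=
    (closure_mono hball).trans Metric.closure_ball_subset_closedBall
  have hsnonneg : ∀ y ∈ closure Ω, 0 ≤ K^2 - ‖y - z‖^2 := by
    intro y hy
    have h1 : ‖y - z‖ ≤ K := by
      have := hclos hy
      rwa [Metric.mem_closedBall, dist_eq_norm] at this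
    nlinarith [norm_nonneg (y - z)]
  -- w ≤ 0 on the closure
  have hwnonpos : ∀ y ∈ closure Ω, w y ≤ 0 := by
    intro y hy
    have hs := hsnonneg y hy
    set s := K^2 - ‖y - z‖^2 with hsdef
    have h1 : s^(p+1) = s^p * s := by
      rcases eq_or_lt_of_le hs with h|h
      · rw [← h]
        simp [Real.zero_rpow (by linarith : p+1 ≠ 0), Real.zero_rpow (by linarith : p ≠ 0)]
      · exact Real.rpow_add_one h.ne' p
    have h2 : s^p ≤ (K^2)^p := Real.rpow_le_rpow hs (by nlinarith [norm_nonneg (y - z)]) hp0.le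
    have h3 : b * s^(p+1) ≤ (a/4) * s := by
      rw [h1]
      calc b * (s^p * s) = (b * s^p) * s := by ring
      _ ≤ (b * (K^2)^p) * s := by
          apply mul_le_mul_of_nonneg_right _ hs
          exact mul_le_mul_of_nonneg_left h2 hb.le
      _ ≤ (a/4) * s := by
          apply mul_le_mul_of_nonneg_right _ hs
          linarith
    simp only [hwdef]
    nlinarith
  -- minimize u - w on the compact closure
  intro x hx
  have hcomp : IsCompact (closure Ω) := hbdd.isCompact_closure
  obtain ⟨xb, hxbcl, hxbmin⟩ := hcomp.exists_isMinOn ⟨x, subset_closure hx⟩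
    (hucont.sub hwcont.continuousOn)
  rw [isMinOn_iff] at hxbmin
  -- suffices to show 0 ≤ u xb - w xb
  suffices hkey : 0 ≤ u xb - w xb by
    have h1 := hxbmin x (subset_closure hx)
    have h2 : 0 ≤ u x - w x := le_trans hkey h1
    have hs := hsnonneg x (subset_closure hx)
    have h3 : b * (K^2 - ‖x - z‖^2)^(p+1) ≥ 0 :=
      mul_nonneg hb.le (Real.rpow_nonneg hs _)
    simp only [hwdef] at h2
    nlinarith
  by_contra hcon
  push_neg at hcon
  -- the min point is in Ω
  have hxbΩ : xb ∈ Ω := by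
    by_contra hxbno
    have hfr : xb ∈ frontier Ω := by
      rw [hopen.frontier_eq]
      exact ⟨hxbcl, hxbno⟩
    have h1 : u xb = 0 := hubd xb hfr
    have h2 : w xb ≤ 0 := hwnonpos xb hxbcl
    linarith
  -- local min
  have hlocmin : IsLocalMin (fun y => u y - w y) xb := by
    have hmem : Ω ∈ nhds xb := hopen.mem_nhds hxbΩ
    exact Filter.eventually_of_mem hmem fun y hy => hxbmin y (subset_closure hy)
  -- notation
  set v : EuclideanSpace ℝ (Fin n) := xb - z with hvdef
  set qb : ℝ := ‖v‖^2 with hqbdef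
  set sb : ℝ := K^2 - qb with hsbdef
  have hvK : ‖v‖ < K := by
    have := hball hxbΩ
    rwa [Metric.mem_ball, dist_eq_norm] at this
  have hsb0 : 0 < sb := by
    simp only [hsbdef, hqbdef]
    nlinarith [norm_nonneg v]
  have hsbK : sb ≤ K^2 := by
    simp only [hsbdef, hqbdef]
    nlinarith [norm_nonneg v]
  -- second derivative of u
  have humem : Ω ∈ nhds xb := hopen.mem_nhds hxbΩ
  have hu2at : ContDiffAt ℝ 2 u xb := hu2.contDiffAt humem
  have hud : ∀ᶠ y in nhds xb, HasFDerivAt u (fderiv ℝ u y) y := by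
    filter_upwards [eventually_mem_nhds_iff.mpr humem] with y hy
    exact (((hu2.contDiffAt hy).differentiableAt (by norm_num)).hasFDerivAt)
  have hBdiff : ContDiffAt ℝ 1 (fderiv ℝ u) xb := hu2at.fderiv_right (by norm_num)
  set B := fderiv ℝ (fderiv ℝ u) xb with hBdef
  have hB : HasFDerivAt (fderiv ℝ u) B xb := (hBdiff.differentiableAt (by norm_num)).hasFDerivAt
  have hsymm : ∀ ξ η, B ξ η = B η ξ := fun ξ η =>
    second_derivative_symmetric_of_eventually hud hB ξ η
  -- the quadratic form inequality at the minimum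
  set cw : ℝ := 4*(b*(p+1)*p*sb^(p-1)) with hcwdef
  have hsbp1 : 0 < sb^(p-1) := Real.rpow_pos_of_pos hsb0 _
  have hcw0 : 0 ≤ cw := by positivity
  have hquad : ∀ ξ : EuclideanSpace ℝ (Fin n),
      a*‖ξ‖^2 + cw*((inner ℝ v ξ : ℝ))^2 ≤ B ξ ξ := by
    intro ξ
    set I : ℝ := (inner ℝ v ξ : ℝ) with hIdef
    set N : ℝ := ‖ξ‖^2 with hNdef
    set L : ℝ → EuclideanSpace ℝ (Fin n) := fun t => xb + t • ξ with hLdef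
    have hL0 : L 0 = xb := by simp [hLdef]
    have hLd : ∀ t, HasDerivAt L ξ t := by
      intro t
      have h1 : HasDerivAt (fun t : ℝ => t • ξ) ((1:ℝ) • ξ) t := (hasDerivAt_id t).smul_const ξ
      simpa [hLdef] using h1.const_add xb
    have hLcont : Continuous L := continuous_const.add (continuous_id.smul continuous_const)
    set σ : ℝ → ℝ := fun t => qb + 2*I*t + N*t^2 with hσdef
    have hσval : ∀ t, ‖L t - z‖^2 = σ t := by
      intro t
      have h1 : L t - z = v + t • ξ := by
        simp only [hLdef, hvdef]
        abel
      rw [h1, norm_add_sq_real, real_inner_smul_right, norm_smul]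
      simp only [Real.norm_eq_abs, mul_pow, sq_abs, hσdef, hqbdef, hIdef, hNdef]
      ring
    have hσd : ∀ t, HasDerivAt σ (2*I + 2*N*t) t := by
      intro t
      have h1 : HasDerivAt (fun t:ℝ => qb + 2*I*t + N*t^2) (0 + 2*I*1 + N*(2*t^1)) t :=
        ((hasDerivAt_const t qb).add ((hasDerivAt_id t).const_mul (2*I))).add
          ((hasDerivAt_pow 2 t).const_mul N)
      have h2 : (2*I + 2*N*t) = 0 + 2*I*1 + N*(2*t^1) := by ring
      rw [h2]
      exact h1
    set ψ : ℝ → ℝ := fun r => -(a * (K^2 - r)) + b * (K^2 - r)^(p+1) with hψdef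
    have hwL : ∀ t, w (L t) = ψ (σ t) := by
      intro t
      simp only [hwdef, hψdef]
      rw [hσval]
    have hψd : ∀ r, HasDerivAt ψ (a - b*(p+1)*(K^2 - r)^p) r := by
      intro r
      have h1 : HasDerivAt (fun r : ℝ => K^2 - r) (-1) r := by
        simpa using (hasDerivAt_id r).const_sub (K^2)
      have h2 : HasDerivAt (fun s : ℝ => s^(p+1)) ((p+1) * (K^2 - r)^p) (K^2 - r) := by
        have h := Real.hasDerivAt_rpow_const (x := K^2 - r) (p := p+1) (Or.inr (by linarith))
        rwa [show p+1-1 = p by ring] at h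
      have h3 := h2.comp r h1
      have h4 : HasDerivAt (fun r : ℝ => -(a*(K^2 - r))) a r := by
        have h := (h1.const_mul a).neg
        exact h.congr_deriv (by ring)
      have h5 := h4.add (h3.const_mul b)
      exact h5.congr_deriv (by ring)
    set Wd : ℝ → ℝ := fun t => (a - b*(p+1)*(K^2 - σ t)^p) * (2*I + 2*N*t) with hWddef
    have hwd : ∀ t, HasDerivAt (fun t => w (L t)) (Wd t) t := by
      intro t
      have h1 := (hψd (σ t)).comp t (hσd t)
      have h2 : (fun t => w (L t)) = fun t => ψ (σ t) := funext fun t => hwL t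
      rw [h2]
      exact h1
    have hud2 : ∀ᶠ t in nhds (0:ℝ), HasDerivAt (fun t => u (L t)) ((fderiv ℝ u (L t)) ξ) t := by
      have hev : ∀ᶠ t in nhds (0:ℝ), L t ∈ Ω := by
        have hc : ContinuousAt L 0 := hLcont.continuousAt
        have := hc (hL0 ▸ humem)
        exact this
      filter_upwards [hev] with t ht
      exact (((hu2.contDiffAt (hopen.mem_nhds ht)).differentiableAt
        (by norm_num)).hasFDerivAt).comp_hasDerivAt t (hLd t)
    set g : ℝ → ℝ := fun t => u (L t) - w (L t) with hgdef
    set g' : ℝ → ℝ := fun t => (fderiv ℝ u (L t)) ξ - Wd t with hg'def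
    have hgd : ∀ᶠ t in nhds (0:ℝ), HasDerivAt g (g' t) t := by
      filter_upwards [hud2] with t ht
      exact ht.sub (hwd t)
    have hgmin : IsLocalMin g 0 := by
      have h1 : IsLocalMin (fun y => u y - w y) (L 0) := hL0 ▸ hlocmin
      exact h1.comp_continuous hLcont.continuousAt
    -- second derivative of g' at 0
    have hu'' : HasDerivAt (fun t => (fderiv ℝ u (L t)) ξ) (B ξ ξ) 0 := by
      have hBL : HasFDerivAt (fderiv ℝ u) B (L 0) := by rw [hL0]; exact hB
      have h1 : HasDerivAt (fun t => fderiv ℝ u (L t)) (B ξ) 0 :=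
        hBL.comp_hasDerivAt 0 (hLd 0)
      have h2 := h1.clm_apply (hasDerivAt_const 0 ξ)
      simpa using h2
    have hW'' : HasDerivAt Wd (cw*I^2 + 2*N*(a - b*(p+1)*sb^p)) 0 := by
      have hKσ : ∀ t, HasDerivAt (fun t => K^2 - σ t) (-(2*I + 2*N*t)) t := fun t =>
        (hσd t).const_sub (K^2)
      have hσ0 : σ 0 = qb := by simp [hσdef]
      have hKσ0 : K^2 - σ 0 = sb := by rw [hσ0]
      have hrp : HasDerivAt (fun s : ℝ => s^p) (p * sb^(p-1)) sb :=
        Real.hasDerivAt_rpow_const (Or.inl hsb0.ne')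
      have hrp' : HasDerivAt (fun s : ℝ => s^p) (p * sb^(p-1)) (K^2 - σ 0) := by
        rw [hKσ0]
        exact hrp
      have h1 : HasDerivAt (fun t => (K^2 - σ t)^p) (p * sb^(p-1) * (-(2*I + 2*N*0))) 0 :=
        by have := hrp'.comp 0 (hKσ 0); exact this
      have h2 : HasDerivAt (fun t => a - b*(p+1)*(K^2 - σ t)^p)
          (-(b*(p+1) * (p * sb^(p-1) * (-(2*I + 2*N*0))))) 0 := by
        have h := ((h1.const_mul (b*(p+1))).const_sub a)
        convert h using 1
        all_goals ring
      have h3 : HasDerivAt (fun t : ℝ => 2*I + 2*N*t) (2*N) 0 := by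
        have h := ((hasDerivAt_id (0:ℝ)).const_mul (2*N)).const_add (2*I)
        exact h.congr_deriv (by ring)
      have h4 := h2.mul h3
      have h5 : (fun t => (a - b*(p+1)*(K^2 - σ t)^p) * (2*I + 2*N*t)) = Wd := rfl
      change HasDerivAt Wd _ 0 at h4
      convert h4 using 1
      have hσ0' : K^2 - σ 0 = sb := hKσ0
      rw [hσ0']
      simp only [hcwdef]
      ring
    have hgd2 : HasDerivAt g' (B ξ ξ - (cw*I^2 + 2*N*(a - b*(p+1)*sb^p))) 0 := hu''.sub hW''
    have hc2 := sd_test hgmin hgd hgd2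
    have hsbp : sb^p ≤ (K^2)^p := Real.rpow_le_rpow hsb0.le hsbK hp0.le
    have hsbpn : 0 ≤ sb^p := Real.rpow_nonneg hsb0.le p
    have hN0 : 0 ≤ N := by rw [hNdef]; positivity
    have haux : a ≤ 2*(a - b*(p+1)*sb^p) := by nlinarith [mul_le_mul_of_nonneg_left hsbp hb.le, mul_nonneg hb.le hsbpn]
    nlinarith [sq_nonneg I]
  -- coordinates of v
  set vf : Fin n → ℝ := fun i => v i with hvfdef
  set H := hess u xb with hHdef
  -- entries of the Hessian
  have hij : ∀ (i j : Fin n), H i j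
      = B (EuclideanSpace.single i 1) (EuclideanSpace.single j 1) := by
    intro i j
    have hd := (hB.clm_apply
      (hasFDerivAt_const (EuclideanSpace.single j 1) xb)).fderiv
    have : H i j = fderiv ℝ (fun y => fderiv ℝ u y (EuclideanSpace.single j 1)) xb
        (EuclideanSpace.single i 1) := rfl
    rw [this, hd]
    simp
  -- the comparison matrix
  set matA : Matrix (Fin n) (Fin n) ℝ :=
    a • ((1 : Matrix (Fin n) (Fin n) ℝ)
      + Matrix.replicateCol Unit ((cw/a) • vf) * Matrix.replicateRow Unit vf) with hmatAdef
  have hentry : ∀ i j, matA i j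
      = a * ((1 : Matrix (Fin n) (Fin n) ℝ) i j) + cw * (vf i * vf j) := by
    intro i j
    simp only [hmatAdef, Matrix.smul_apply, Matrix.add_apply, Matrix.mul_apply,
      Matrix.replicateCol_apply, Matrix.replicateRow_apply, Finset.univ_unique, Finset.sum_singleton,
      Pi.smul_apply, smul_eq_mul]
    field_simp
  -- quadratic form of matA
  have hquadm : ∀ xv : Fin n → ℝ,
      star xv ⬝ᵥ (matA *ᵥ xv) = a * (xv ⬝ᵥ xv) + cw * (vf ⬝ᵥ xv)^2 := by
    intro xv
    have h1 : ∀ i, (matA *ᵥ xv) i = a * xv i + cw * vf i * (vf ⬝ᵥ xv) := by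
      intro i
      calc (matA *ᵥ xv) i = ∑ j, matA i j * xv j := rfl
      _ = ∑ j, (a * ((1 : Matrix (Fin n) (Fin n) ℝ) i j) * xv j
            + cw * (vf i * vf j) * xv j) := by
          refine Finset.sum_congr rfl fun j _ => ?_
          rw [hentry]; ring
      _ = a * xv i + cw * vf i * (vf ⬝ᵥ xv) := by
          rw [Finset.sum_add_distrib]
          congr 1
          · simp [Matrix.one_apply, ite_mul, mul_ite]
          · rw [dotProduct, Finset.mul_sum]
            refine Finset.sum_congr rfl fun j _ => ?_
            ring
    calc star xv ⬝ᵥ (matA *ᵥ xv) = ∑ i, xv i * (matA *ᵥ xv) i := by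
          simp [dotProduct]
    _ = ∑ i, (a * (xv i * xv i) + (cw * (vf ⬝ᵥ xv)) * (vf i * xv i)) := by
          refine Finset.sum_congr rfl fun i _ => ?_
          rw [h1]; ring
    _ = a * (xv ⬝ᵥ xv) + cw * (vf ⬝ᵥ xv)^2 := by
          rw [Finset.sum_add_distrib, ← Finset.mul_sum, ← Finset.mul_sum]
          have e1 : ∑ i, xv i * xv i = xv ⬝ᵥ xv := rfl
          have e2 : ∑ i, vf i * xv i = vf ⬝ᵥ xv := rfl
          rw [e1, e2]; ring
  -- transfer E-vectors to coordinate vectors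
  have htrans : ∀ xv : Fin n → ℝ,
      a * (xv ⬝ᵥ xv) + cw * (vf ⬝ᵥ xv)^2 ≤ star xv ⬝ᵥ (H *ᵥ xv) := by
    intro xv
    set ξ : EuclideanSpace ℝ (Fin n) := (WithLp.equiv 2 (Fin n → ℝ)).symm xv with hξdef
    have hξi : ∀ i, ξ i = xv i := fun i => rfl
    have hdecomp : ξ = ∑ i, xv i • EuclideanSpace.single i (1:ℝ) := by
      have h := (EuclideanSpace.basisFun (Fin n) ℝ).sum_repr ξ
      simp only [EuclideanSpace.basisFun_repr, EuclideanSpace.basisFun_apply] at h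
      exact h.symm
    have hBform : B ξ ξ = ∑ i, ∑ j, (xv i * xv j) * B (EuclideanSpace.single i 1)
        (EuclideanSpace.single j 1) := by
      have hsum1 : B ξ = ∑ i, xv i • B (EuclideanSpace.single i 1) := by
        conv_lhs => rw [hdecomp]
        rw [map_sum]
        exact Finset.sum_congr rfl fun i _ => by rw [ContinuousLinearMap.map_smul]
      have hBone : ∀ η : EuclideanSpace ℝ (Fin n),
          B η ξ = ∑ j, xv j * B η (EuclideanSpace.single j 1) := by
        intro η
        conv_lhs => rw [hdecomp]
        rw [map_sum]
        exact Finset.sum_congr rfl fun j _ => by rw [ContinuousLinearMap.map_smul]; rfl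
      have hBξξ : B ξ ξ = ∑ i, xv i * (B (EuclideanSpace.single i 1) ξ) := by
        rw [hsum1, ContinuousLinearMap.sum_apply]
        exact Finset.sum_congr rfl fun i _ => by rw [ContinuousLinearMap.smul_apply]; rfl
      rw [hBξξ]
      refine Finset.sum_congr rfl fun i _ => ?_
      rw [hBone, Finset.mul_sum]
      refine Finset.sum_congr rfl fun j _ => ?_
      ring
    have hHform : star xv ⬝ᵥ (H *ᵥ xv) = ∑ i, ∑ j, (xv i * xv j) * B (EuclideanSpace.single i 1)
        (EuclideanSpace.single j 1) := by
      calc star xv ⬝ᵥ (H *ᵥ xv) = ∑ i, xv i * ∑ j, H i j * xv j := by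
            simp [dotProduct, Matrix.mulVec]
      _ = ∑ i, ∑ j, (xv i * xv j) * B (EuclideanSpace.single i 1)
            (EuclideanSpace.single j 1) := by
          refine Finset.sum_congr rfl fun i _ => ?_
          rw [Finset.mul_sum]
          refine Finset.sum_congr rfl fun j _ => ?_
          rw [hij]; ring
    have hnorm : ‖ξ‖^2 = xv ⬝ᵥ xv := by
      rw [← real_inner_self_eq_norm_sq]
      simp [PiLp.inner_apply, dotProduct, hξi]
      rw [EuclideanSpace.norm_sq_eq]; exact Finset.sum_congr rfl fun i _ => by rw [Real.norm_eq_abs, sq_abs, sq, hξi]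
    have hinner : (inner ℝ v ξ : ℝ) = vf ⬝ᵥ xv := by
      simp [PiLp.inner_apply, dotProduct, hξi, hvfdef]
      exact Finset.sum_congr rfl fun i _ => mul_comm _ _
    have := hquad ξ
    rw [hnorm, hinner] at this
    rw [hHform, ← hBform]
    exact this
  -- matA is positive definite
  have hmatAherm : matA.IsHermitian := by
    rw [Matrix.IsHermitian]
    ext i j
    rw [Matrix.conjTranspose_apply, hentry, hentry, star_trivial]
    have h1 : ((1:Matrix (Fin n) (Fin n) ℝ) j i) = ((1:Matrix (Fin n) (Fin n) ℝ) i j) := by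
      simp [Matrix.one_apply, eq_comm]
    rw [h1]
    ring
  have hmatApd : matA.PosDef := by
    refine Matrix.PosDef.of_dotProduct_mulVec_pos hmatAherm (fun xv hxv => ?_)
    rw [hquadm xv]
    have h1 : 0 < xv ⬝ᵥ xv := by
      have h2 : xv ⬝ᵥ xv ≠ 0 := fun h => hxv (dotProduct_self_eq_zero.mp h)
      have h3 : 0 ≤ xv ⬝ᵥ xv := Finset.sum_nonneg fun i _ => mul_self_nonneg _
      exact lt_of_le_of_ne h3 (Ne.symm h2)
    have h2 : 0 ≤ cw * (vf ⬝ᵥ xv)^2 := mul_nonneg hcw0 (sq_nonneg _)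
    nlinarith
  -- H - matA is positive semidefinite
  have hHherm : H.IsHermitian := by
    rw [Matrix.IsHermitian]
    ext i j
    rw [Matrix.conjTranspose_apply, hij, hij]
    simp [hsymm]
  have hHA : (H - matA).PosSemidef := by
    refine Matrix.PosSemidef.of_dotProduct_mulVec_nonneg (hHherm.sub hmatAherm) (fun xv => ?_)
    rw [Matrix.sub_mulVec, dotProduct_sub, hquadm xv]
    have := htrans xv
    simp only [star_trivial] at this ⊢
    linarith
  -- determinant comparison
  have hdetle : matA.det ≤ H.det := det_le_det_of_sub_posSemidef hmatApd hHA
  have hvv : vf ⬝ᵥ vf = qb := by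
    rw [hqbdef, ← real_inner_self_eq_norm_sq]
    simp [PiLp.inner_apply, dotProduct, hvfdef]
    rw [EuclideanSpace.norm_sq_eq]; exact Finset.sum_congr rfl fun i _ => by rw [Real.norm_eq_abs, sq_abs, sq]
  have hdetA : matA.det = a^n + a^(n-1) * cw * qb := by
    have ha' : a ≠ 0 := ha0.ne'
    have hpow : a^n = a^(n-1) * a := by
      conv_lhs => rw [show n = (n-1) + 1 by omega]
      rw [pow_succ]
    rw [hmatAdef, Matrix.det_smul, Matrix.det_one_add_replicateCol_mul_replicateRow, dotProduct_smul,
      hvv, smul_eq_mul, Fintype.card_fin, mul_add, mul_one, hpow]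
    field_simp
  -- value of w at xb
  have hsxb : K^2 - ‖xb - z‖^2 = sb := by rw [hsbdef, hqbdef, hvdef]
  have hwxb : w xb = -(a*sb) + b*sb^(p+1) := by
    simp only [hwdef]
    rw [hsxb]
  have hsbp1' : sb^(p+1) = sb^p * sb := Real.rpow_add_one hsb0.ne' p
  have hsbp : sb^p ≤ (K^2)^p := Real.rpow_le_rpow hsb0.le hsbK hp0.le
  set mw : ℝ := -(w xb) with hmwdef
  have hmw_low : a/2 * sb ≤ mw := by
    rw [hmwdef, hwxb, hsbp1']
    have h1 : b * (sb^p * sb) ≤ (a/4) * sb := by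
      calc b * (sb^p * sb) = (b * sb^p) * sb := by ring
      _ ≤ (b * (K^2)^p) * sb := by
          apply mul_le_mul_of_nonneg_right _ hsb0.le
          exact mul_le_mul_of_nonneg_left hsbp hb.le
      _ ≤ (a/4) * sb := by
          apply mul_le_mul_of_nonneg_right _ hsb0.le
          linarith
    nlinarith [mul_nonneg ha0.le hsb0.le]
  have hmw_pos : 0 < mw :=
    lt_of_lt_of_le (mul_pos (by linarith : (0:ℝ) < a/2) hsb0) hmw_low
  have humw : mw < -(u xb) := by
    rw [hmwdef]
    linarith
  have hune : 0 < -(u xb) := lt_trans hmw_pos humw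
  have hrpow_lt : (-(u xb))^(p-1) < mw^(p-1) :=
    Real.rpow_lt_rpow_of_neg hmw_pos humw (by linarith)
  have hdetH : H.det = R xb * (-(u xb))^(p-1) := hMA xb hxbΩ
  have hdethle : H.det ≤ Rbar * (-(u xb))^(p-1) := by
    rw [hdetH]
    exact mul_le_mul_of_nonneg_right (hR xb hxbΩ).2 (Real.rpow_nonneg hune.le _)
  have hstrict : Rbar * (-(u xb))^(p-1) < Rbar * mw^(p-1) :=
    mul_lt_mul_of_pos_left hrpow_lt hRbar
  -- final case analysis: Rbar * mw^(p-1) ≤ matA.det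
  have hfinal : Rbar * mw^(p-1) ≤ matA.det := by
    have han0 : 0 ≤ a^(n-1) := pow_nonneg ha0.le _
    have hqb0 : 0 ≤ qb := by rw [hqbdef]; positivity
    rcases le_or_gt sb (K^2/2) with hcase|hcase
    · -- near the boundary
      have hq2 : K^2/2 ≤ qb := by rw [hsbdef] at hcase; linarith
      have h1 : mw^(p-1) ≤ (a/2 * sb)^(p-1) :=
        Real.rpow_le_rpow_of_nonpos (mul_pos (by linarith : (0:ℝ) < a/2) hsb0) hmw_low (by linarith)
      have h2 : (a/2 * sb)^(p-1) = (a/2)^(p-1) * sb^(p-1) :=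
        Real.mul_rpow (by linarith) hsb0.le
      have h3 : Rbar * mw^(p-1) ≤ (Rbar * (a/2)^(p-1)) * sb^(p-1) := by
        calc Rbar * mw^(p-1) ≤ Rbar * ((a/2)^(p-1) * sb^(p-1)) := by
              rw [← h2]
              exact mul_le_mul_of_nonneg_left h1 hRbar.le
        _ = (Rbar * (a/2)^(p-1)) * sb^(p-1) := by ring
      have h4 : (Rbar * (a/2)^(p-1)) * sb^(p-1)
          ≤ (a^(n-1) * (2*K^2) * (b*(p+1)*p)) * sb^(p-1) :=
        mul_le_mul_of_nonneg_right hbcond hsbp1.le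
      have h5 : (a^(n-1) * (2*K^2) * (b*(p+1)*p)) * sb^(p-1) ≤ a^(n-1) * cw * qb := by
        rw [hcwdef]
        have : a^(n-1) * (4*(b*(p+1)*p*sb^(p-1))) * (K^2/2) ≤ a^(n-1) * (4*(b*(p+1)*p*sb^(p-1))) * qb := by
          apply mul_le_mul_of_nonneg_left hq2
          positivity
        nlinarith
      have h6 : 0 ≤ a^n := pow_nonneg ha0.le _
      rw [hdetA]
      linarith
    · -- interior
      have h1 : a*(K^2/4) ≤ a/2 * sb := by nlinarith
      have h0 : 0 < a*(K^2/4) := by positivity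
      have h2 : mw^(p-1) ≤ (a*(K^2/4))^(p-1) :=
        Real.rpow_le_rpow_of_nonpos h0 (by linarith) (by linarith)
      have h3 : Rbar * mw^(p-1) ≤ Rbar * (a*(K^2/4))^(p-1) :=
        mul_le_mul_of_nonneg_left h2 hRbar.le
      have h4 : 0 ≤ a^(n-1) * cw * qb := by positivity
      rw [hdetA]
      linarith [le_trans h3 hacond]
  linarith

end Barrier

end AuxLemmas

/-- for `0 < p < 1`, a uniform gradient bound, with constant depending only on
`n`, `p`, `R̄` and `K`, for solutions on domains satisfying a uniform enclosing sphere
condition with radius `K` and with `0 ≤ R ≤ R̄`. -/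
theorem stmt7 (n : ℕ) (hn : 1 ≤ n) (p : ℝ) (hp0 : 0 < p) (hp1 : p < 1)
    (K Rbar : ℝ) (hK : 0 < K) (hRbar : 0 < Rbar) :
    ∃ C : ℝ, ∀ Ω : Set (EuclideanSpace ℝ (Fin n)),
      IsOpen Ω → Bornology.IsBounded Ω → Convex ℝ Ω →
      (∀ x₀ ∈ frontier Ω, ∃ z : EuclideanSpace ℝ (Fin n), Ω ⊆ ball z K ∧ dist x₀ z = K) →
      ∀ R : EuclideanSpace ℝ (Fin n) → ℝ, (∀ x ∈ Ω, 0 ≤ R x ∧ R x ≤ Rbar) →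
      ∀ u : EuclideanSpace ℝ (Fin n) → ℝ,
        ConvexOn ℝ (closure Ω) u → ContDiffOn ℝ 2 u Ω → ContinuousOn u (closure Ω) →
        (∀ x ∈ Ω, u x < 0) → (∀ x ∈ frontier Ω, u x = 0) →
        (∀ x ∈ Ω, (hess u x).det = R x * (-u x) ^ (p - 1)) →
        ∀ x ∈ Ω, ‖gradient u x‖ ≤ C := by
  -- choice of constants
  have hK2 : (0:ℝ) < K^2 := by positivity
  set bup : ℝ := Rbar * (1/2:ℝ)^(p-1) / (2*K^2*((p+1)*p)) with hbupdef
  have hbup0 : 0 < bup := by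
    apply div_pos
    · exact mul_pos hRbar (Real.rpow_pos_of_pos (by norm_num) _)
    · positivity
  set a : ℝ := max 1 (max (Rbar * (K^2/4)^(p-1)) (4*(K^2)^p*bup)) with hadef
  have ha1 : 1 ≤ a := le_max_left _ _
  have ha0 : 0 < a := lt_of_lt_of_le one_pos ha1
  have hap1 : a^(p-1) ≤ 1 := Real.rpow_le_one_of_one_le_of_nonpos ha1 (by linarith)
  set b : ℝ := Rbar * (a/2)^(p-1) / (a^(n-1)*(2*K^2)*((p+1)*p)) with hbdef
  have hb0 : 0 < b := by
    apply div_pos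
    · exact mul_pos hRbar (Real.rpow_pos_of_pos (by linarith) _)
    · positivity
  have hbbup : b ≤ bup := by
    rw [hbdef, hbupdef]
    have h1 : (a/2)^(p-1) = a^(p-1) * (1/2:ℝ)^(p-1) := by
      rw [← Real.mul_rpow ha0.le (by norm_num)]
      congr 1
      ring
    have h2 : Rbar * (a/2)^(p-1) ≤ Rbar * (1/2:ℝ)^(p-1) := by
      rw [h1]
      calc Rbar * (a^(p-1) * (1/2:ℝ)^(p-1)) = (Rbar * (1/2:ℝ)^(p-1)) * a^(p-1) := by ring
      _ ≤ (Rbar * (1/2:ℝ)^(p-1)) * 1 :=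
          mul_le_mul_of_nonneg_left hap1 (by positivity)
      _ = Rbar * (1/2:ℝ)^(p-1) := mul_one _
    have h3 : 2*K^2*((p+1)*p) ≤ a^(n-1)*(2*K^2)*((p+1)*p) := by
      have h4 : (1:ℝ) ≤ a^(n-1) := one_le_pow₀ ha1
      nlinarith [mul_le_mul_of_nonneg_right h4 (show (0:ℝ) ≤ 2*K^2*((p+1)*p) by positivity)]
    apply div_le_div₀ (by positivity) h2 (by positivity) h3
  have hab : 4*b*(K^2)^p ≤ a := by
    calc 4*b*(K^2)^p ≤ 4*bup*(K^2)^p := by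
          have := Real.rpow_nonneg hK2.le p
          nlinarith
    _ = 4*(K^2)^p*bup := by ring
    _ ≤ a := le_trans (le_max_right _ _) (le_max_right _ _)
  have hacond : Rbar * (a*(K^2/4)) ^ (p-1) ≤ a^n := by
    have h1 : (a*(K^2/4))^(p-1) = a^(p-1) * (K^2/4)^(p-1) := Real.mul_rpow ha0.le (by positivity)
    have h2 : Rbar * (a*(K^2/4))^(p-1) ≤ Rbar * (K^2/4)^(p-1) := by
      rw [h1]
      calc Rbar * (a^(p-1) * (K^2/4)^(p-1)) = (Rbar * (K^2/4)^(p-1)) * a^(p-1) := by ring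
      _ ≤ (Rbar * (K^2/4)^(p-1)) * 1 := mul_le_mul_of_nonneg_left hap1 (by positivity)
      _ = Rbar * (K^2/4)^(p-1) := mul_one _
    have h3 : Rbar * (K^2/4)^(p-1) ≤ a := le_trans (le_trans (le_max_left _ _) (le_max_right _ _)) le_rfl
    have h4 : a ≤ a^n := le_self_pow₀ ha1 (by omega)
    linarith
  have hbcond : Rbar * (a/2)^(p-1) ≤ a^(n-1) * (2*K^2) * (b*(p+1)*p) := by
    have hden : a^(n-1)*(2*K^2)*((p+1)*p) ≠ 0 := by positivity
    have heq : b * (a^(n-1)*(2*K^2)*((p+1)*p)) = Rbar * (a/2)^(p-1) := by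
      rw [hbdef]; exact div_mul_cancel₀ _ hden
    have h5 : Rbar * (a/2)^(p-1) = a^(n-1)*(2*K^2)*(b*(p+1)*p) := by rw [← heq]; ring
    linarith
  refine ⟨2*K*a, ?_⟩
  intro Ω hopen hbdd hconv hsphere R hR u hconvu hu2 hucont huneg hubd hMA x hx
  set g : EuclideanSpace ℝ (Fin n) := gradient u x with hgdef
  rcases eq_or_ne g 0 with hg0|hg0
  · rw [hg0]
    simp
    positivity
  · have hgn : 0 < ‖g‖ := norm_pos_iff.mpr hg0
    set vh : EuclideanSpace ℝ (Fin n) := ‖g‖⁻¹ • g with hvhdef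
    have hvh1 : ‖vh‖ = 1 := by
      rw [hvhdef, norm_smul, norm_inv, norm_norm, inv_mul_cancel₀ hgn.ne']
    -- the ray
    set γ : ℝ → EuclideanSpace ℝ (Fin n) := fun t => x + t • vh with hγdef
    have hγcont : Continuous γ := continuous_const.add (continuous_id.smul continuous_const)
    have hγ0 : γ 0 = x := by simp [hγdef]
    set S : Set ℝ := {t : ℝ | γ t ∈ Ω} with hSdef
    have hSopen : IsOpen S := hopen.preimage hγcont
    have hS0 : (0:ℝ) ∈ S := by
      rw [hSdef, mem_setOf_eq, hγ0]
      exact hx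
    have hSne : S.Nonempty := ⟨0, hS0⟩
    obtain ⟨r, hr⟩ := hbdd.subset_closedBall x
    have hSbdd : BddAbove S := by
      refine ⟨r, fun t ht => ?_⟩
      have h1 : γ t ∈ Metric.closedBall x r := hr ht
      rw [Metric.mem_closedBall, dist_eq_norm] at h1
      have h2 : γ t - x = t • vh := by simp [hγdef]
      rw [h2, norm_smul, hvh1, mul_one, Real.norm_eq_abs] at h1
      exact le_trans (le_abs_self t) h1
    set T : ℝ := sSup S with hTdef
    have hT0 : 0 < T := by
      obtain ⟨ε, hε, hεball⟩ := Metric.isOpen_iff.mp hSopen 0 hS0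
      have h1 : ε/2 ∈ S := hεball (by
        rw [Metric.mem_ball, dist_zero_right, Real.norm_eq_abs, abs_of_pos (by linarith)]
        linarith)
      calc (0:ℝ) < ε/2 := by linarith
      _ ≤ T := le_csSup hSbdd h1
    have hTnotin : γ T ∉ Ω := by
      intro hmem
      obtain ⟨ε, hε, hεball⟩ := Metric.isOpen_iff.mp hSopen T hmem
      have h1 : T + ε/2 ∈ S := hεball (by
        rw [Metric.mem_ball, Real.dist_eq]
        rw [abs_of_pos (by linarith : (0:ℝ) < T + ε/2 - T)]
        linarith)
      have := le_csSup hSbdd h1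
      linarith
    have hTcl : γ T ∈ closure Ω := by
      rw [_root_.mem_closure_iff]
      intro o ho hmem
      obtain ⟨δ, hδ, hδball⟩ := Metric.isOpen_iff.mp (ho.preimage hγcont) T hmem
      obtain ⟨t, htS, htlt⟩ := exists_lt_of_lt_csSup hSne (by linarith : T - δ/2 < T)
      have htle : t ≤ T := le_csSup hSbdd htS
      have h1 : t ∈ Metric.ball T δ := by
        rw [Metric.mem_ball, Real.dist_eq, abs_sub_lt_iff]
        constructor <;> linarith
      exact ⟨γ t, hδball h1, htS⟩
    set y : EuclideanSpace ℝ (Fin n) := γ T with hydef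
    have hyfr : y ∈ frontier Ω := by
      rw [hopen.frontier_eq]
      exact ⟨hTcl, hTnotin⟩
    obtain ⟨z, hzball, hzdist⟩ := hsphere y hyfr
    -- the barrier estimate
    have hbar := barrier hn p K Rbar a b hp0 hp1 hK hRbar ha1 hb0 hab hacond hbcond
      Ω hopen hbdd z hzball R u hR hu2 hucont hubd hMA x hx
    -- geometry
    have hxz : ‖x - z‖ < K := by
      have := hzball hx
      rwa [Metric.mem_ball, dist_eq_norm] at this
    have hxz0 : 0 ≤ ‖x - z‖ := norm_nonneg _
    have hyz : ‖y - z‖ = K := by rw [← dist_eq_norm]; exact hzdist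
    have hxy : ‖y - x‖ = T := by
      have h1 : y - x = T • vh := by simp [hydef, hγdef]
      rw [h1, norm_smul, hvh1, mul_one, Real.norm_eq_abs, abs_of_pos hT0]
    have htriangle : K - ‖x - z‖ ≤ T := by
      have h1 : y - z = (y - x) + (x - z) := by abel
      have h2 : ‖y - z‖ ≤ ‖y - x‖ + ‖x - z‖ := h1 ▸ norm_add_le _ _
      rw [hyz, hxy] at h2
      linarith
    have hbar2 : -u x ≤ 2*K*a*T := by
      have h1 : K^2 - ‖x - z‖^2 = (K - ‖x - z‖)*(K + ‖x - z‖) := by ring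
      have h2 : K - ‖x - z‖ ≤ T := htriangle
      have h3 : K + ‖x - z‖ ≤ 2*K := by linarith
      calc -u x ≤ a * (K^2 - ‖x - z‖^2) := hbar
      _ = a * ((K - ‖x - z‖)*(K + ‖x - z‖)) := by rw [h1]
      _ ≤ a * (T * (2*K)) := by
          apply mul_le_mul_of_nonneg_left _ ha0.le
          apply mul_le_mul h2 h3 (by linarith) hT0.le
      _ = 2*K*a*T := by ring
    -- convexity: derivative at 0 is at most the slope
    have hdiff : DifferentiableAt ℝ u x :=
      (hu2.contDiffAt (hopen.mem_nhds hx)).differentiableAt (by norm_num)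
    have hlineD : HasDerivAt (fun t => u (γ t)) ((fderiv ℝ u x) vh) 0 := by
      have h1 : HasDerivAt γ vh 0 := by
        have h2 : HasDerivAt (fun t : ℝ => t • vh) ((1:ℝ) • vh) 0 := (hasDerivAt_id 0).smul_const vh
        simpa [hγdef] using h2.const_add x
      have h3 : HasFDerivAt u (fderiv ℝ u x) (γ 0) := by rw [hγ0]; exact hdiff.hasFDerivAt
      exact h3.comp_hasDerivAt 0 h1
    have hconvh : ConvexOn ℝ (Icc 0 T) (fun t => u (γ t)) := by
      have hclconv : Convex ℝ (closure Ω) := hconv.closure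
      have hmap : ∀ t ∈ Icc (0:ℝ) T, γ t ∈ closure Ω := by
        intro t ht
        rcases ht with ⟨ht0, htT⟩
        have hcomb := hclconv (subset_closure hx) hTcl
          (a := 1 - t/T) (b := t/T) (by
            have : t/T ≤ 1 := div_le_one_of_le₀ htT hT0.le
            linarith)
          (by positivity) (by ring)
        have heqpt : (1 - t/T) • x + (t/T) • (γ T) = γ t := by
          simp only [hγdef, smul_add, smul_smul]
          rw [div_mul_cancel₀ _ hT0.ne']
          module
        rwa [heqpt] at hcomb
      refine ⟨convex_Icc 0 T, ?_⟩
      intro s hs t ht α β hα hβ hαβ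
      have h1 : α • γ s + β • γ t = γ (α • s + β • t) := by
        simp only [hγdef, smul_add, smul_smul, smul_eq_mul]
        have hx' : α • x + β • x = x := by rw [← add_smul, hαβ, one_smul]
        calc α • x + (α*s) • vh + (β • x + (β*t) • vh)
            = (α • x + β • x) + ((α*s) • vh + (β*t) • vh) := by abel
        _ = x + (α*s + β*t) • vh := by rw [hx', add_smul]
      have h2 := hconvu.2 (hmap s hs) (hmap t ht) hα hβ hαβ
      simp only []
      rw [← h1] at *
      convert h2 using 2
    -- slope bound
    have hslope : (fderiv ℝ u x) vh ≤ (u y - u x)/T := by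
      have h1 : Tendsto (slope (fun t => u (γ t)) 0) (nhdsWithin 0 (Ioi 0))
          (nhds ((fderiv ℝ u x) vh)) := by
        have h2 := hasDerivAt_iff_tendsto_slope.mp hlineD
        exact h2.mono_left (nhdsWithin_mono _ (fun t ht => by
          simp only [mem_compl_iff, mem_singleton_iff]
          exact ne_of_gt ht))
      have h2 : ∀ᶠ t in nhdsWithin 0 (Ioi 0),
          slope (fun t => u (γ t)) 0 t ≤ slope (fun t => u (γ t)) 0 T := by
        filter_upwards [Ioo_mem_nhdsGT hT0] with t ht
        rcases ht with ⟨ht0, htT⟩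
        have := hconvh.secant_mono (a := 0) (x := t) (y := T)
          (left_mem_Icc.mpr hT0.le) ⟨ht0.le, htT.le⟩ (right_mem_Icc.mpr hT0.le)
          (ne_of_gt ht0) (ne_of_gt hT0) htT.le
        simpa [slope_def_field] using this
      have h3 := le_of_tendsto h1 h2
      have h4 : slope (fun t => u (γ t)) 0 T = (u y - u x)/T := by
        rw [slope_def_field, hγ0, hydef]
        ring_nf
      rwa [h4] at h3
    have huy : u y = 0 := hubd y hyfr
    have hfd : (fderiv ℝ u x) vh = ‖g‖ := by
      have h1 : (fderiv ℝ u x) vh = (inner ℝ g vh : ℝ) := by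
        rw [hgdef]
        exact (InnerProductSpace.toDual_symm_apply).symm
      rw [h1, hvhdef, real_inner_smul_right, real_inner_self_eq_norm_sq]
      field_simp
    rw [← hfd]
    calc (fderiv ℝ u x) vh ≤ (u y - u x)/T := hslope
    _ = (-u x)/T := by rw [huy]; ring_nf
    _ ≤ (2*K*a*T)/T := by gcongr
    _ = 2*K*a := by field_simp
end

section
/- Let n ≥ 2, p < 1, δ = 2/(n + 1 − p), K > 0 and R̄ > 0. Then there exists a constant A > K² such that the function w(x) = (‖x'‖² − A) x_n^δ, where x = (x', x_n) with x' = (x₁, …, x_{n−1}), is convex on the half-ball B_K⁺ = {x ∈ ℝⁿ : ‖x‖ < K, x_n > 0} and satisfies det D²w(x) ≥ R̄ (−w(x))^{p−1} for all x ∈ B_K⁺. -/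
open MeasureTheory Metric Set Filter

noncomputable section Barrier

variable {n : ℕ}

/-- `qf N z = ∑_{i ≠ N} z i ^ 2`. -/
def qf (N : Fin n) (z : EuclideanSpace ℝ (Fin n)) : ℝ := ∑ i ∈ Finset.univ.erase N, z i ^ 2

/-- derivative of `qf`. -/
def Qd (N : Fin n) (y : EuclideanSpace ℝ (Fin n)) : EuclideanSpace ℝ (Fin n) →L[ℝ] ℝ :=
  ∑ i ∈ Finset.univ.erase N, (2 * y i) • EuclideanSpace.proj i

lemma Qd_apply (N : Fin n) (y v : EuclideanSpace ℝ (Fin n)) :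
    Qd N y v = ∑ i ∈ Finset.univ.erase N, 2 * y i * v i := by
  simp [Qd, mul_assoc]

lemma hasFDerivAt_qf (N : Fin n) (y : EuclideanSpace ℝ (Fin n)) :
    HasFDerivAt (qf N) (Qd N y) y := by
  unfold qf Qd
  refine HasFDerivAt.fun_sum fun i _ => ?_
  have h := ((EuclideanSpace.proj (𝕜 := ℝ) i).hasFDerivAt (x := y)).mul
    ((EuclideanSpace.proj (𝕜 := ℝ) i).hasFDerivAt (x := y))
  simpa [pow_two, two_mul, add_smul, Pi.mul_def] using h

lemma hasFDerivAt_rpowN (N : Fin n) (c : ℝ) (y : EuclideanSpace ℝ (Fin n)) (hy : y N ≠ 0) :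
    HasFDerivAt (fun z : EuclideanSpace ℝ (Fin n) => z N ^ c)
      ((c * y N ^ (c - 1)) • EuclideanSpace.proj (𝕜 := ℝ) N) y := by
  have h : HasDerivAt (fun s : ℝ => s ^ c) (c * y N ^ (c - 1)) (EuclideanSpace.proj (𝕜 := ℝ) N y) := by
    simpa using Real.hasDerivAt_rpow_const (x := y N) (p := c) (Or.inl hy)
  exact h.comp_hasFDerivAt y ((EuclideanSpace.proj (𝕜 := ℝ) N).hasFDerivAt (x := y))


/-- the barrier function in clean form -/
def wfun (N : Fin n) (δ A : ℝ) (z : EuclideanSpace ℝ (Fin n)) : ℝ := (qf N z - A) * z N ^ δ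

def D1 (N : Fin n) (δ A : ℝ) (y : EuclideanSpace ℝ (Fin n)) : EuclideanSpace ℝ (Fin n) →L[ℝ] ℝ :=
  (qf N y - A) • ((δ * y N ^ (δ - 1)) • EuclideanSpace.proj N) + (y N ^ δ) • Qd N y

lemma hasFDerivAt_wfun (N : Fin n) (δ A : ℝ) (y : EuclideanSpace ℝ (Fin n)) (hy : y N ≠ 0) :
    HasFDerivAt (wfun N δ A) (D1 N δ A y) y :=
  ((hasFDerivAt_qf N y).sub_const A).mul (hasFDerivAt_rpowN N δ y hy)

lemma D1_apply (N : Fin n) (δ A : ℝ) (y v : EuclideanSpace ℝ (Fin n)) :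
    D1 N δ A y v = (qf N y - A) * (δ * y N ^ (δ - 1)) * v N
      + y N ^ δ * ∑ i ∈ Finset.univ.erase N, 2 * y i * v i := by
  simp [D1, Qd_apply, mul_assoc]

lemma D1_single_ne (N : Fin n) (δ A : ℝ) (y : EuclideanSpace ℝ (Fin n)) {j : Fin n} (hj : j ≠ N) :
    D1 N δ A y (EuclideanSpace.single j 1) = y N ^ δ * (2 * y j) := by
  rw [D1_apply]
  rw [Finset.sum_eq_single j]
  · simp [EuclideanSpace.single_apply, hj.symm]
  · intro b _ hb
    simp [EuclideanSpace.single_apply, hb]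
  · intro hb
    simp at hb
    exact absurd hb (by simpa using hj)

lemma D1_single_N (N : Fin n) (δ A : ℝ) (y : EuclideanSpace ℝ (Fin n)) :
    D1 N δ A y (EuclideanSpace.single N 1) = (qf N y - A) * (δ * y N ^ (δ - 1)) := by
  rw [D1_apply]
  have : ∀ i ∈ Finset.univ.erase N, 2 * y i * (EuclideanSpace.single N (1:ℝ)) i = 0 := by
    intro i hi
    have : i ≠ N := Finset.ne_of_mem_erase hi
    simp [EuclideanSpace.single_apply, this]
  rw [Finset.sum_congr rfl this]
  simp [EuclideanSpace.single_apply]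

/-- second derivative of `g_N = (qf - A) * (δ * t^(δ-1))`. -/
lemma hasFDerivAt_gN (N : Fin n) (δ A : ℝ) (y : EuclideanSpace ℝ (Fin n)) (hy : y N ≠ 0) :
    HasFDerivAt (fun z : EuclideanSpace ℝ (Fin n) => (qf N z - A) * (δ * z N ^ (δ - 1)))
      ((qf N y - A) • (δ • (((δ - 1) * y N ^ (δ - 1 - 1)) • EuclideanSpace.proj N))
        + (δ * y N ^ (δ - 1)) • Qd N y) y :=
  ((hasFDerivAt_qf N y).sub_const A).mul ((hasFDerivAt_rpowN N (δ - 1) y hy).const_mul δ)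

/-- second derivative of `g_j = t^δ * (2 * z j)` for `j ≠ N`. -/
lemma hasFDerivAt_gj (N : Fin n) (δ : ℝ) (y : EuclideanSpace ℝ (Fin n)) (hy : y N ≠ 0) (j : Fin n) :
    HasFDerivAt (fun z : EuclideanSpace ℝ (Fin n) => z N ^ δ * (2 * z j))
      ((y N ^ δ) • ((2:ℝ) • (EuclideanSpace.proj j : EuclideanSpace ℝ (Fin n) →L[ℝ] ℝ))
        + (2 * y j) • ((δ * y N ^ (δ - 1)) • EuclideanSpace.proj N)) y := by
  have h2 : HasFDerivAt (fun z : EuclideanSpace ℝ (Fin n) => 2 * z j)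
      ((2:ℝ) • (EuclideanSpace.proj j : EuclideanSpace ℝ (Fin n) →L[ℝ] ℝ)) y :=
    ((EuclideanSpace.proj (𝕜 := ℝ) j).hasFDerivAt (x := y)).const_mul (2:ℝ)
  exact (hasFDerivAt_rpowN N δ y hy).mul h2

lemma Qd_single (N : Fin n) (y : EuclideanSpace ℝ (Fin n)) (j : Fin n) :
    Qd N y (EuclideanSpace.single j 1) = if j = N then 0 else 2 * y j := by
  rw [Qd_apply]
  by_cases hj : j = N
  · rw [if_pos hj]
    refine Finset.sum_eq_zero fun i hi => ?_
    have : i ≠ j := by rw [hj]; exact Finset.ne_of_mem_erase hi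
    simp [EuclideanSpace.single_apply, this]
  · rw [Finset.sum_eq_single j]
    · simp [EuclideanSpace.single_apply, hj]
    · intro b _ hb
      simp [EuclideanSpace.single_apply, hb]
    · intro hb
      simp at hb
      exact absurd hb (by simpa using hj)

lemma hess_wfun (N : Fin n) (δ A : ℝ) (x : EuclideanSpace ℝ (Fin n)) (hx : 0 < x N) (i j : Fin n) :
    hess (wfun N δ A) x i j =
      if i = N then
        (if j = N then (qf N x - A) * (δ * ((δ - 1) * x N ^ (δ - 1 - 1)))
         else δ * x N ^ (δ - 1) * (2 * x j))
      else
        (if j = N then 2 * x i * (δ * x N ^ (δ - 1))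
         else (if i = j then x N ^ δ * 2 else 0)) := by
  have hmem : {y : EuclideanSpace ℝ (Fin n) | 0 < y N} ∈ nhds x :=
    (isOpen_lt continuous_const (EuclideanSpace.proj (𝕜 := ℝ) N).continuous).mem_nhds hx
  unfold hess
  by_cases hj : N = j
  · subst hj
    have hev : (fun y : EuclideanSpace ℝ (Fin n) =>
          fderiv ℝ (wfun N δ A) y (EuclideanSpace.single N 1))
        =ᶠ[nhds x] fun y => (qf N y - A) * (δ * y N ^ (δ - 1)) := by
      filter_upwards [hmem] with y hy
      rw [(hasFDerivAt_wfun N δ A y (ne_of_gt hy)).fderiv, D1_single_N]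
    rw [hev.fderiv_eq, (hasFDerivAt_gN N δ A x (ne_of_gt hx)).fderiv]
    by_cases hi : N = i
    · subst hi
      simp [Qd_single, EuclideanSpace.single_apply]
    · simp [Qd_single, EuclideanSpace.single_apply, hi, Ne.symm hi]
      ring
  · have hev : (fun y : EuclideanSpace ℝ (Fin n) =>
          fderiv ℝ (wfun N δ A) y (EuclideanSpace.single j 1))
        =ᶠ[nhds x] fun y => y N ^ δ * (2 * y j) := by
      filter_upwards [hmem] with y hy
      rw [(hasFDerivAt_wfun N δ A y (ne_of_gt hy)).fderiv, D1_single_ne N δ A y (fun h => hj h.symm)]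
    have hj' : j ≠ N := fun h => hj h.symm
    rw [hev.fderiv_eq, (hasFDerivAt_gj N δ x (ne_of_gt hx) j).fderiv]
    by_cases hi : N = i
    · subst hi
      simp [EuclideanSpace.single_apply, hj, Ne.symm hj, hj']
      ring
    · have hi' : i ≠ N := fun h => hi h.symm
      by_cases hij : i = j
      · subst hij
        simp [EuclideanSpace.single_apply, hi, Ne.symm hi, hi', hj']
      · simp [EuclideanSpace.single_apply, hi, Ne.symm hi, hij, Ne.symm hij, hj', hi']

lemma det_LDLt {n : ℕ} (N : Fin n) (d u : Fin n → ℝ) (hu : u N = 0) :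
    (Matrix.of fun i j : Fin n =>
      (if i = j then d i else 0) + (if i = N then u j * d j else 0)
        + (if j = N then u i * d i else 0)
        + (if i = N then 1 else 0) * (if j = N then 1 else 0) * (∑ k, u k ^ 2 * d k)).det
      = ∏ i, d i := by
  classical
  set L : Matrix (Fin n) (Fin n) ℝ :=
    1 + Matrix.replicateCol (Fin 1) (fun i => if i = N then (1:ℝ) else 0) * Matrix.replicateRow (Fin 1) u with hL
  have hLe : ∀ i k, L i k = (if i = k then 1 else 0) + (if i = N then 1 else 0) * u k := by
    intro i k
    simp [hL, Matrix.mul_apply, Matrix.one_apply, Matrix.replicateCol, Matrix.replicateRow]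
  have hLd : L.det = 1 := by
    rw [hL]
    erw [Matrix.det_one_add_replicateCol_mul_replicateRow]
    simp [dotProduct, hu]
  have hM : (Matrix.of fun i j : Fin n =>
      (if i = j then d i else 0) + (if i = N then u j * d j else 0)
        + (if j = N then u i * d i else 0)
        + (if i = N then 1 else 0) * (if j = N then 1 else 0) * (∑ k, u k ^ 2 * d k))
      = L * Matrix.diagonal d * L.transpose := by
    ext i j
    have h1 : (L * Matrix.diagonal d * L.transpose) i j = ∑ k, L i k * d k * L j k := by
      simp [Matrix.mul_apply, Matrix.transpose_apply, Matrix.diagonal_apply, mul_ite, mul_zero,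
        ite_mul, zero_mul, Finset.sum_ite_eq', mul_assoc]
    rw [h1]
    have h2 : ∀ k, L i k * d k * L j k
        = (if i = k then 1 else 0) * ((if j = k then 1 else 0) * d k)
          + (if i = N then 1 else 0) * ((if j = k then 1 else 0) * (u k * d k))
          + (if j = N then 1 else 0) * ((if i = k then 1 else 0) * (u k * d k))
          + (if i = N then 1 else 0) * (if j = N then 1 else 0) * (u k ^ 2 * d k) := by
      intro k
      rw [hLe, hLe]
      split_ifs <;> ring
    rw [Finset.sum_congr rfl fun k _ => h2 k]
    rw [Finset.sum_add_distrib, Finset.sum_add_distrib, Finset.sum_add_distrib]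
    simp only [← Finset.mul_sum]
    have e1 : ∑ k, (if i = k then (1:ℝ) else 0) * ((if j = k then 1 else 0) * d k)
        = if i = j then d i else 0 := by
      rw [Finset.sum_eq_single i]
      · simp [eq_comm]
      · intro b _ hb; simp [Ne.symm hb]
      · simp
    have e2 : ∑ k, (if j = k then (1:ℝ) else 0) * (u k * d k) = u j * d j := by
      rw [Finset.sum_eq_single j]
      · simp
      · intro b _ hb; simp [Ne.symm hb]
      · simp
    have e3 : ∑ k, (if i = k then (1:ℝ) else 0) * (u k * d k) = u i * d i := by
      rw [Finset.sum_eq_single i]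
      · simp
      · intro b _ hb; simp [Ne.symm hb]
      · simp
    simp only [Matrix.of_apply, e1, e2, e3, ← Finset.mul_sum]
    split_ifs <;> ring
  rw [hM, Matrix.det_mul, Matrix.det_mul, Matrix.det_transpose, hLd, Matrix.det_diagonal]
  ring

lemma det_hess {n : ℕ} (N : Fin n) (δ A : ℝ) (x : EuclideanSpace ℝ (Fin n)) (hx : 0 < x N) :
    (hess (wfun N δ A) x).det
      = ((qf N x - A) * (δ * ((δ - 1) * x N ^ (δ - 1 - 1)))
          - δ ^ 2 / x N ^ 2 * (x N ^ δ * 2) * qf N x) * (x N ^ δ * 2) ^ (n - 1) := by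
  classical
  have htne : x N ≠ 0 := ne_of_gt hx
  set c : ℝ := x N ^ δ * 2 with hc
  set s : ℝ := (qf N x - A) * (δ * ((δ - 1) * x N ^ (δ - 1 - 1))) - δ ^ 2 / x N ^ 2 * c * qf N x
    with hs
  set d : Fin n → ℝ := fun i => if i = N then s else c with hd
  set u : Fin n → ℝ := fun i => if i = N then 0 else δ * x i / x N with hu2
  have huN : u N = 0 := by simp [hu2]
  have hsum : ∑ k, u k ^ 2 * d k = δ ^ 2 / x N ^ 2 * c * qf N x := by
    rw [← Finset.add_sum_erase _ _ (Finset.mem_univ N), huN]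
    have : ∀ k ∈ Finset.univ.erase N, u k ^ 2 * d k = δ ^ 2 / x N ^ 2 * c * x k ^ 2 := by
      intro k hk
      have hkN : k ≠ N := Finset.ne_of_mem_erase hk
      simp only [hu2, hd, if_neg hkN]
      field_simp
    rw [Finset.sum_congr rfl this, ← Finset.mul_sum]
    simp [qf]
  have hrp : x N ^ (δ - 1) = x N ^ δ / x N := Real.rpow_sub_one htne δ
  have hMM : hess (wfun N δ A) x = Matrix.of (fun i j : Fin n =>
      (if i = j then d i else 0) + (if i = N then u j * d j else 0)
        + (if j = N then u i * d i else 0)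
        + (if i = N then 1 else 0) * (if j = N then 1 else 0) * (∑ k, u k ^ 2 * d k)) := by
    ext i j
    rw [hess_wfun N δ A x hx i j]
    by_cases hi : i = N <;> by_cases hj : j = N
    · have hij : i = j := by rw [hi, hj]
      rw [hsum]
      simp only [Matrix.of_apply, hi, hj, hij, if_true, eq_self_iff_true, hsum, hd, hu2, hs]
      ring
    · have hij : i ≠ j := by rw [hi]; exact fun h => hj h.symm
      have hj2 : ¬(N = j) := fun h => hj h.symm
      simp only [Matrix.of_apply, if_neg hij, if_neg hj, if_neg hj2, if_pos hi, hi, hd, hu2, hs,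
        hrp, if_true, mul_zero, zero_mul, add_zero, zero_add, hc, eq_self_iff_true]
      field_simp
    · have hij : i ≠ j := by rw [hj]; exact hi
      have hi2 : ¬(N = i) := fun h => hi h.symm
      simp only [Matrix.of_apply, if_neg hij, if_neg hi, if_neg hi2, if_pos hj, hj, hd, hu2, hs,
        hrp, if_true, mul_zero, zero_mul, add_zero, zero_add, hc, eq_self_iff_true]
      field_simp
    · by_cases hij : i = j
      · simp [Matrix.of_apply, hi, hj, hij, hd, hc]
      · simp [Matrix.of_apply, hi, hj, hij, hd]
  rw [hMM, det_LDLt N d u huN]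
  rw [← Finset.mul_prod_erase _ _ (Finset.mem_univ N)]
  have : ∀ i ∈ Finset.univ.erase N, d i = c := fun i hi => by
    simp [hd, Finset.ne_of_mem_erase hi]
  rw [Finset.prod_congr rfl this, Finset.prod_const]
  have hcard : (Finset.univ.erase N).card = n - 1 := by
    rw [Finset.card_erase_of_mem (Finset.mem_univ N)]
    simp
  rw [hcard]
  simp [hd]


/-- the second derivative quadratic form along direction `v` -/
def Qsc (N : Fin n) (δ A : ℝ) (v z : EuclideanSpace ℝ (Fin n)) : ℝ :=
  (qf N z - A) * (δ * ((δ - 1) * z N ^ (δ - 1 - 1))) * (v N * v N)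
    + δ * z N ^ (δ - 1) * Qd N z v * v N + δ * z N ^ (δ - 1) * Qd N v z * v N
    + z N ^ δ * Qd N v v

lemma hasDerivAt_line (x v : EuclideanSpace ℝ (Fin n)) (τ : ℝ) :
    HasDerivAt (fun σ : ℝ => x + σ • v) v τ := by
  simpa using ((hasDerivAt_id τ).smul_const v).const_add x

lemma hasDerivAt_psi (N : Fin n) (δ A : ℝ) (x v : EuclideanSpace ℝ (Fin n)) (τ : ℝ)
    (hz : (x + τ • v) N ≠ 0) :
    HasDerivAt (fun σ : ℝ => (qf N (x + σ • v) - A) * (δ * (x + σ • v) N ^ (δ - 1)) * v N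
        + (x + σ • v) N ^ δ * Qd N v (x + σ • v))
      (Qsc N δ A v (x + τ • v)) τ := by
  set z := x + τ • v with hzdef
  have hline : HasDerivAt (fun σ : ℝ => x + σ • v) v τ := hasDerivAt_line x v τ
  have h1 := (hasFDerivAt_gN N δ A z hz).mul_const (v N)
  have h2 := (hasFDerivAt_rpowN N δ z hz).mul ((Qd N v).hasFDerivAt (x := z))
  have h3 := (h1.add h2).comp_hasDerivAt τ hline
  refine h3.congr_deriv ?_
  simp [Qsc, mul_assoc]
  ring


lemma qf_nonneg (N : Fin n) (z : EuclideanSpace ℝ (Fin n)) : 0 ≤ qf N z :=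
  Finset.sum_nonneg fun i _ => sq_nonneg _

lemma qf_add_sq (N : Fin n) (z : EuclideanSpace ℝ (Fin n)) : qf N z + z N ^ 2 = ‖z‖ ^ 2 := by
  have h := Finset.sum_erase_add Finset.univ (fun i => z i ^ 2) (Finset.mem_univ N)
  rw [EuclideanSpace.norm_eq, Real.sq_sqrt (by positivity)]
  simp only [Real.norm_eq_abs, sq_abs]
  exact h

lemma Qsc_nonneg (N : Fin n) (δ A : ℝ) (hδ0 : 0 < δ) (v z : EuclideanSpace ℝ (Fin n))
    (ht : 0 < z N) (hq : 2 * δ * qf N z ≤ (1 - δ) * (A - qf N z)) :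
    0 ≤ Qsc N δ A v z := by
  have htne : z N ≠ 0 := ne_of_gt ht
  have hrp1 : z N ^ (δ - 1) = z N ^ δ / z N := Real.rpow_sub_one htne δ
  have hrp2 : z N ^ (δ - 1 - 1) = z N ^ δ / z N / z N := by
    rw [Real.rpow_sub_one htne (δ - 1), hrp1]
  have hsos : ∑ i ∈ Finset.univ.erase N,
        2 * z N ^ δ / z N ^ 2 * (z N * v i + δ * z i * v N) ^ 2
      = z N ^ δ * Qd N v v + (δ * (z N ^ δ / z N) * v N) * Qd N z v
        + (δ * (z N ^ δ / z N) * v N) * Qd N v z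
        + (2 * δ ^ 2 * z N ^ δ / z N ^ 2 * v N ^ 2) * qf N z := by
    have hpt : ∀ i ∈ Finset.univ.erase N,
        2 * z N ^ δ / z N ^ 2 * (z N * v i + δ * z i * v N) ^ 2
          = z N ^ δ * (2 * v i * v i) + (δ * (z N ^ δ / z N) * v N) * (2 * z i * v i)
            + (δ * (z N ^ δ / z N) * v N) * (2 * v i * z i)
            + (2 * δ ^ 2 * z N ^ δ / z N ^ 2 * v N ^ 2) * z i ^ 2 := by
      intro i _
      field_simp
      ring
    rw [Finset.sum_congr rfl hpt, Finset.sum_add_distrib, Finset.sum_add_distrib,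
      Finset.sum_add_distrib, ← Finset.mul_sum, ← Finset.mul_sum, ← Finset.mul_sum,
      ← Finset.mul_sum, ← Qd_apply, ← Qd_apply, ← Qd_apply]
    rfl
  have key : Qsc N δ A v z
      = (∑ i ∈ Finset.univ.erase N,
          2 * z N ^ δ / z N ^ 2 * (z N * v i + δ * z i * v N) ^ 2)
        + ((1 - δ) * (A - qf N z) - 2 * δ * qf N z) * δ * (z N ^ δ / z N ^ 2) * v N ^ 2 := by
    rw [hsos]
    simp only [Qsc, hrp1, hrp2]
    field_simp
    ring
  rw [key]
  have h1 : 0 ≤ ∑ i ∈ Finset.univ.erase N,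
      2 * z N ^ δ / z N ^ 2 * (z N * v i + δ * z i * v N) ^ 2 := by
    refine Finset.sum_nonneg fun i _ => ?_
    have : (0:ℝ) < z N ^ δ := Real.rpow_pos_of_pos ht δ
    positivity
  have h2 : (0:ℝ) ≤ ((1 - δ) * (A - qf N z) - 2 * δ * qf N z) * δ * (z N ^ δ / z N ^ 2) * v N ^ 2 := by
    have hb : (0:ℝ) ≤ (1 - δ) * (A - qf N z) - 2 * δ * qf N z := by linarith
    have : (0:ℝ) < z N ^ δ := Real.rpow_pos_of_pos ht δ
    positivity
  linarith

lemma convexOn_wfun (N : Fin n) (δ A K : ℝ) (hδ0 : 0 < δ) (hδ1 : δ < 1)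
    (hA : 2 * δ * K ^ 2 ≤ (1 - δ) * (A - K ^ 2)) :
    ConvexOn ℝ {x : EuclideanSpace ℝ (Fin n) | ‖x‖ < K ∧ 0 < x N} (wfun N δ A) := by
  have hconv : Convex ℝ {x : EuclideanSpace ℝ (Fin n) | ‖x‖ < K ∧ 0 < x N} := by
    have h1 : Convex ℝ {x : EuclideanSpace ℝ (Fin n) | ‖x‖ < K} := by
      have e : {x : EuclideanSpace ℝ (Fin n) | ‖x‖ < K} = ball 0 K := by
        ext w
        simp [mem_ball_zero_iff]
      rw [e]; exact convex_ball _ _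
    have h2 : Convex ℝ {x : EuclideanSpace ℝ (Fin n) | 0 < x N} :=
      convex_halfSpace_gt ⟨fun a b => rfl, fun c a => rfl⟩ 0
    exact h1.inter h2
  have hqbound : ∀ z : EuclideanSpace ℝ (Fin n), ‖z‖ < K →
      2 * δ * qf N z ≤ (1 - δ) * (A - qf N z) := by
    intro z hz
    have h0 : 0 ≤ qf N z := qf_nonneg N z
    have hK : qf N z ≤ K ^ 2 := by
      have h3 := qf_add_sq N z
      have h4 : ‖z‖ ^ 2 ≤ K ^ 2 := by
        have := norm_nonneg z
        nlinarith
      nlinarith [sq_nonneg (z N)]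
    nlinarith
  refine ⟨hconv, ?_⟩
  intro x hx y hy a b ha hb hab
  set v : EuclideanSpace ℝ (Fin n) := y - x with hv
  have hseg : ∀ τ ∈ Icc (0:ℝ) 1,
      (x + τ • v) ∈ {x : EuclideanSpace ℝ (Fin n) | ‖x‖ < K ∧ 0 < x N} := by
    intro τ hτ
    have heq : x + τ • v = (1 - τ) • x + τ • y := by rw [hv]; module
    rw [heq]
    exact hconv hx hy (by linarith [hτ.2]) hτ.1 (by ring)
  have hφ : ConvexOn ℝ (Icc (0:ℝ) 1) (fun τ => wfun N δ A (x + τ • v)) := by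
    refine convexOn_of_hasDerivWithinAt2_nonneg (convex_Icc 0 1)
      (f' := fun τ => D1 N δ A (x + τ • v) v)
      (f'' := fun τ => Qsc N δ A v (x + τ • v)) ?_ ?_ ?_ ?_
    · intro τ hτ
      exact (((hasFDerivAt_wfun N δ A _ (ne_of_gt (hseg τ hτ).2)).comp_hasDerivAt τ
        (hasDerivAt_line x v τ)).continuousAt).continuousWithinAt
    · intro τ hτ
      rw [interior_Icc] at hτ
      exact ((hasFDerivAt_wfun N δ A _
        (ne_of_gt (hseg τ (Ioo_subset_Icc_self hτ)).2)).comp_hasDerivAt τ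
        (hasDerivAt_line x v τ)).hasDerivWithinAt
    · intro τ hτ
      rw [interior_Icc] at hτ
      have h := hasDerivAt_psi N δ A x v τ (ne_of_gt (hseg τ (Ioo_subset_Icc_self hτ)).2)
      have hfeq : (fun σ : ℝ => D1 N δ A (x + σ • v) v)
          = fun σ => (qf N (x + σ • v) - A) * (δ * (x + σ • v) N ^ (δ - 1)) * v N
            + (x + σ • v) N ^ δ * Qd N v (x + σ • v) := by
        funext σ
        rw [D1_apply, Qd_apply]
        congr 1
        congr 1
        exact Finset.sum_congr rfl fun i _ => by ring
      rw [hfeq]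
      exact h.hasDerivWithinAt
    · intro τ hτ
      rw [interior_Icc] at hτ
      have hmem := hseg τ (Ioo_subset_Icc_self hτ)
      exact Qsc_nonneg N δ A hδ0 v _ hmem.2 (hqbound _ hmem.1)
  have h01 : (0:ℝ) ∈ Icc (0:ℝ) 1 := ⟨le_refl 0, zero_le_one⟩
  have h11 : (1:ℝ) ∈ Icc (0:ℝ) 1 := ⟨zero_le_one, le_refl 1⟩
  have hmain := hφ.2 h01 h11 ha hb hab
  simp only [smul_eq_mul, mul_zero, mul_one, zero_add] at hmain
  have e0 : x + (0:ℝ) • v = x := by module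
  have e1 : x + (1:ℝ) • v = y := by rw [hv]; module
  have eb : a • x + b • y = x + b • v := by
    have ha' : a = 1 - b := by linarith
    rw [hv, ha']; module
  rw [e0, e1] at hmain
  simp only [smul_eq_mul]
  rw [eb]
  exact hmain

end Barrier

lemma final_ineq (n : ℕ) (hn : 1 ≤ n) (p δ A K Rbar q t : ℝ) (hp : p < 1)
    (hδ0 : 0 < δ) (hδ1 : δ < 1) (hδn : δ * n - 2 = δ * (p - 1))
    (hRbar : 0 < Rbar) (ht : 0 < t) (hq0 : 0 ≤ q) (hqK : q ≤ K ^ 2)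
    (hAq1 : 1 ≤ A - q)
    (hkey : Rbar / (2 ^ (n - 1) * δ) + 2 * δ * K ^ 2 ≤ (1 - δ) * (A - K ^ 2)) :
    Rbar * ((A - q) * t ^ δ) ^ (p - 1)
      ≤ ((q - A) * (δ * ((δ - 1) * t ^ (δ - 1 - 1))) - δ ^ 2 / t ^ 2 * (t ^ δ * 2) * q)
          * (t ^ δ * 2) ^ (n - 1) := by
  have htne : t ≠ 0 := ne_of_gt ht
  have htδ : 0 < t ^ δ := Real.rpow_pos_of_pos ht δ
  have h2p : (0:ℝ) < 2 ^ (n - 1) := by positivity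
  have hrp1 : t ^ (δ - 1 - 1) = t ^ δ / t / t := by
    rw [Real.rpow_sub_one htne, Real.rpow_sub_one htne]
  have hTn : (t ^ δ) ^ (n - 1) = t ^ (δ * ((n - 1 : ℕ) : ℝ)) := by
    rw [← Real.rpow_natCast (t ^ δ) (n - 1), ← Real.rpow_mul (le_of_lt ht)]
  have hTT : t ^ (δ * ((n - 1 : ℕ) : ℝ)) * (t ^ δ / t / t) = t ^ (δ * (p - 1)) := by
    have e1 : t ^ (δ * ((n - 1 : ℕ) : ℝ)) * t ^ δ = t ^ (δ * ((n - 1 : ℕ) : ℝ) + δ) :=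
      (Real.rpow_add ht _ _).symm
    calc t ^ (δ * ((n - 1 : ℕ) : ℝ)) * (t ^ δ / t / t)
        = t ^ (δ * ((n - 1 : ℕ) : ℝ)) * t ^ δ / t / t := by ring
      _ = t ^ (δ * ((n - 1 : ℕ) : ℝ) + δ) / t / t := by rw [e1]
      _ = t ^ (δ * ((n - 1 : ℕ) : ℝ) + δ - 1) / t := by rw [← Real.rpow_sub_one htne]
      _ = t ^ (δ * ((n - 1 : ℕ) : ℝ) + δ - 1 - 1) := by rw [← Real.rpow_sub_one htne]
      _ = t ^ (δ * (p - 1)) := by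
          congr 1
          have h6 : ((n - 1 : ℕ) : ℝ) = (n : ℝ) - 1 := by
            push_cast [hn]
            ring
          rw [h6]
          linarith [hδn]
  have hL1 : ((A - q) * t ^ δ) ^ (p - 1) = (A - q) ^ (p - 1) * t ^ (δ * (p - 1)) := by
    rw [Real.mul_rpow (by linarith) (le_of_lt htδ), ← Real.rpow_mul (le_of_lt ht)]
  have hdet : ((q - A) * (δ * ((δ - 1) * t ^ (δ - 1 - 1))) - δ ^ 2 / t ^ 2 * (t ^ δ * 2) * q)
          * (t ^ δ * 2) ^ (n - 1)
      = 2 ^ (n - 1) * δ * ((1 - δ) * (A - q) - 2 * δ * q) * t ^ (δ * (p - 1)) := by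
    rw [mul_pow, hTn, hrp1, ← hTT]
    field_simp
    ring
  rw [hL1, hdet]
  have hT : 0 < t ^ (δ * (p - 1)) := Real.rpow_pos_of_pos ht _
  have h1 : (A - q) ^ (p - 1) ≤ 1 :=
    Real.rpow_le_one_of_one_le_of_nonpos hAq1 (by linarith)
  have hB : Rbar ≤ 2 ^ (n - 1) * δ * ((1 - δ) * (A - q) - 2 * δ * q) := by
    have h2 : (1 - δ) * (A - K ^ 2) ≤ (1 - δ) * (A - q) := by nlinarith
    have h2' : 2 * δ * q ≤ 2 * δ * K ^ 2 := by nlinarith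
    have h3 : Rbar / (2 ^ (n - 1) * δ) ≤ (1 - δ) * (A - q) - 2 * δ * q := by linarith
    have h4 : 2 ^ (n - 1) * δ * (Rbar / (2 ^ (n - 1) * δ))
        ≤ 2 ^ (n - 1) * δ * ((1 - δ) * (A - q) - 2 * δ * q) :=
      mul_le_mul_of_nonneg_left h3 (le_of_lt (mul_pos h2p hδ0))
    have h5 : 2 ^ (n - 1) * δ * (Rbar / (2 ^ (n - 1) * δ)) = Rbar := by
      field_simp
    linarith
  calc Rbar * ((A - q) ^ (p - 1) * t ^ (δ * (p - 1)))
      ≤ Rbar * (1 * t ^ (δ * (p - 1))) := by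
        refine mul_le_mul_of_nonneg_left ?_ (le_of_lt hRbar)
        exact mul_le_mul_of_nonneg_right h1 (le_of_lt hT)
    _ = Rbar * t ^ (δ * (p - 1)) := by ring
    _ ≤ 2 ^ (n - 1) * δ * ((1 - δ) * (A - q) - 2 * δ * q) * t ^ (δ * (p - 1)) :=
        mul_le_mul_of_nonneg_right hB (le_of_lt hT)

/-- the barrier `w(x) = (‖x'‖² - A) xₙ^δ`, with `δ = 2/(n+1-p)`, is convex on
the half-ball `B_K⁺` and satisfies `det D²w ≥ R̄ (-w)^{p-1}` there, for suitable `A > K²`.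
Here `‖x'‖² = ‖x‖² - xₙ²` and `xₙ` is the last coordinate. -/
theorem stmt8 (n : ℕ) (hn : 2 ≤ n) (p : ℝ) (hp : p < 1) (δ : ℝ)
    (hδ : δ = 2 / ((n : ℝ) + 1 - p)) (K Rbar : ℝ) (hK : 0 < K) (hRbar : 0 < Rbar) :
    ∃ A : ℝ, K ^ 2 < A ∧
      ConvexOn ℝ {x : EuclideanSpace ℝ (Fin n) | ‖x‖ < K ∧ 0 < x ⟨n - 1, by omega⟩}
        (fun x => (‖x‖ ^ 2 - (x ⟨n - 1, by omega⟩) ^ 2 - A) * (x ⟨n - 1, by omega⟩) ^ δ) ∧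
      ∀ x : EuclideanSpace ℝ (Fin n), ‖x‖ < K → 0 < x ⟨n - 1, by omega⟩ →
        Rbar * (-((‖x‖ ^ 2 - (x ⟨n - 1, by omega⟩) ^ 2 - A) * (x ⟨n - 1, by omega⟩) ^ δ)) ^ (p - 1)
          ≤ (hess (fun y => (‖y‖ ^ 2 - (y ⟨n - 1, by omega⟩) ^ 2 - A) * (y ⟨n - 1, by omega⟩) ^ δ) x).det := by
  have hn2 : (2:ℝ) ≤ (n:ℝ) := by exact_mod_cast hn
  have hnp : (0:ℝ) < (n:ℝ) + 1 - p := by linarith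
  have hδ0 : 0 < δ := by rw [hδ]; positivity
  have hδ1 : δ < 1 := by
    rw [hδ, div_lt_one hnp]
    linarith
  have hβ : (0:ℝ) < 1 - δ := by linarith
  have hδeq : δ * ((n:ℝ) + 1 - p) = 2 := by
    rw [hδ]; field_simp
  have hδn : δ * (n:ℝ) - 2 = δ * (p - 1) := by linear_combination hδeq
  have hpow : (0:ℝ) < 2 ^ (n - 1) := by positivity
  obtain ⟨C, hC1, hCkey⟩ : ∃ C : ℝ, 1 ≤ C ∧
      Rbar / (2 ^ (n - 1) * δ) + 2 * δ * K ^ 2 ≤ (1 - δ) * C := by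
    refine ⟨1 + (Rbar / (2 ^ (n - 1) * δ) + 2 * δ * K ^ 2) / (1 - δ), ?_, ?_⟩
    · have : 0 ≤ (Rbar / (2 ^ (n - 1) * δ) + 2 * δ * K ^ 2) / (1 - δ) := by positivity
      linarith
    · rw [mul_add, mul_one, mul_div_cancel₀ _ (ne_of_gt hβ)]
      have h1 : 0 ≤ Rbar / (2 ^ (n - 1) * δ) + 2 * δ * K ^ 2 := by positivity
      nlinarith
  set N : Fin n := ⟨n - 1, by omega⟩ with hN
  refine ⟨K ^ 2 + C, by linarith, ?_, ?_⟩
  · have hfun : (fun x : EuclideanSpace ℝ (Fin n) =>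
        (‖x‖ ^ 2 - (x N) ^ 2 - (K ^ 2 + C)) * (x N) ^ δ) = wfun N δ (K ^ 2 + C) := by
      funext z
      show (‖z‖ ^ 2 - z N ^ 2 - (K ^ 2 + C)) * z N ^ δ = (qf N z - (K ^ 2 + C)) * z N ^ δ
      have h := qf_add_sq N z
      have h2 : ‖z‖ ^ 2 - z N ^ 2 - (K ^ 2 + C) = qf N z - (K ^ 2 + C) := by linarith
      rw [h2]
    show ConvexOn ℝ {x : EuclideanSpace ℝ (Fin n) | ‖x‖ < K ∧ 0 < x N}
      (fun x => (‖x‖ ^ 2 - (x N) ^ 2 - (K ^ 2 + C)) * (x N) ^ δ)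
    rw [hfun]
    refine convexOn_wfun N δ (K ^ 2 + C) K hδ0 hδ1 ?_
    have h1 : 0 ≤ Rbar / (2 ^ (n - 1) * δ) := by positivity
    have h2 : K ^ 2 + C - K ^ 2 = C := by ring
    rw [h2]
    linarith
  · intro x hx1 hx2
    have hx2' : 0 < x N := hx2
    have hfun : (fun y : EuclideanSpace ℝ (Fin n) =>
        (‖y‖ ^ 2 - (y N) ^ 2 - (K ^ 2 + C)) * (y N) ^ δ) = wfun N δ (K ^ 2 + C) := by
      funext z
      show (‖z‖ ^ 2 - z N ^ 2 - (K ^ 2 + C)) * z N ^ δ = (qf N z - (K ^ 2 + C)) * z N ^ δ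
      have h := qf_add_sq N z
      have h2 : ‖z‖ ^ 2 - z N ^ 2 - (K ^ 2 + C) = qf N z - (K ^ 2 + C) := by linarith
      rw [h2]
    show Rbar * (-((‖x‖ ^ 2 - (x N) ^ 2 - (K ^ 2 + C)) * (x N) ^ δ)) ^ (p - 1)
      ≤ (hess (fun y : EuclideanSpace ℝ (Fin n) =>
          (‖y‖ ^ 2 - (y N) ^ 2 - (K ^ 2 + C)) * (y N) ^ δ) x).det
    rw [hfun, det_hess N δ (K ^ 2 + C) x hx2']
    have hq0 : 0 ≤ qf N x := qf_nonneg N x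
    have hqK : qf N x ≤ K ^ 2 := by
      have h3 := qf_add_sq N x
      have h4 : ‖x‖ ^ 2 ≤ K ^ 2 := by
        have := norm_nonneg x
        nlinarith
      nlinarith [sq_nonneg (x N)]
    have hneg : -((‖x‖ ^ 2 - x N ^ 2 - (K ^ 2 + C)) * x N ^ δ)
        = ((K ^ 2 + C) - qf N x) * x N ^ δ := by
      have h := qf_add_sq N x
      have h2 : ‖x‖ ^ 2 - x N ^ 2 - (K ^ 2 + C) = qf N x - (K ^ 2 + C) := by linarith
      rw [h2]
      ring
    rw [hneg]
    refine final_ineq n (by omega) p δ (K ^ 2 + C) K Rbar (qf N x) (x N) hp hδ0 hδ1 hδn hRbar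
      hx2' hq0 hqK (by linarith) ?_
    have h2 : K ^ 2 + C - K ^ 2 = C := by ring
    rw [h2]
    exact hCkey
end

section
/- Let n ≥ 1, p > n + 1, q ∈ (0,1). Set γ = (n + p + 1)/2 − q, δ = (γ − n)/(p − n − 1), C₁ = (2δ)ⁿ · min{1, 2δ − 1} and C₂ = (2δ)ⁿ · max{1, 2δ − 1}. Then δ > 1/2, and for λ > 0 the function w_λ(x) = λ (1 + ‖x‖²)^δ on ℝⁿ satisfies: (i) if λ^{p−1−n} ≥ C₂, then det D²w_λ(x) ≤ (1 + ‖x‖²)^{−γ} w_λ(x)^{p−1} for all x ∈ ℝⁿ; (ii) if 0 < λ^{p−1−n} ≤ C₁, then det D²w_λ(x) ≥ (1 + ‖x‖²)^{−γ} w_λ(x)^{p−1} for all x ∈ ℝⁿ. -/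
open MeasureTheory Metric Set Filter

lemma mydet (n : ℕ) (c a : ℝ) (hc : c ≠ 0) (v : Fin n → ℝ) :
    (Matrix.of fun i j => c * (if i = j then 1 else 0) + a * (v i * v j)).det
      = c ^ n * (1 + (a / c) * ∑ i, v i ^ 2) := by
  have : (Matrix.of fun i j => c * (if i = j then 1 else 0) + a * (v i * v j))
      = c • (1 + Matrix.replicateCol Unit ((a / c) • v) * Matrix.replicateRow Unit v) := by
    ext i j
    simp [Matrix.one_apply, Matrix.mul_apply, mul_add]
    field_simp
  rw [this, Matrix.det_smul, Matrix.det_one_add_replicateCol_mul_replicateRow]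
  simp [dotProduct, Finset.mul_sum]
  left
  apply Finset.sum_congr rfl
  intros; ring

lemma fderiv_step1 {n : ℕ} (lam δ : ℝ) (y : EuclideanSpace ℝ (Fin n)) :
    HasFDerivAt (fun y : EuclideanSpace ℝ (Fin n) => lam * (1 + ‖y‖ ^ 2) ^ δ)
      ((lam * (δ * (1 + ‖y‖ ^ 2) ^ (δ - 1))) • (2 • (innerSL ℝ y))) y := by
  have h0 : (0:ℝ) < 1 + ‖y‖ ^ 2 := by positivity
  have h1 : HasFDerivAt (fun z : EuclideanSpace ℝ (Fin n) => 1 + ‖z‖ ^ 2)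
      (2 • (innerSL ℝ y)) y := ((hasStrictFDerivAt_norm_sq y).hasFDerivAt).const_add 1
  have h2 := (h1.rpow_const (p := δ) (Or.inl h0.ne')).const_mul lam
  rw [← smul_smul]
  exact h2

lemma fderiv_apply_step1 {n : ℕ} (lam δ : ℝ) (j : Fin n) :
    (fun y : EuclideanSpace ℝ (Fin n) =>
        fderiv ℝ (fun z => lam * (1 + ‖z‖ ^ 2) ^ δ) y (EuclideanSpace.single j 1))
      = fun y => (2 * lam * δ) * ((1 + ‖y‖ ^ 2) ^ (δ - 1) * y j) := by
  funext y
  rw [(fderiv_step1 lam δ y).fderiv]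
  simp [EuclideanSpace.inner_single_right, real_inner_comm]
  ring

lemma hess_eq {n : ℕ} (lam δ : ℝ) (x : EuclideanSpace ℝ (Fin n)) :
    hess (fun y => lam * (1 + ‖y‖ ^ 2) ^ δ) x
      = Matrix.of fun i j =>
          (2 * lam * δ * (1 + ‖x‖ ^ 2) ^ (δ - 1)) * (if i = j then 1 else 0)
          + (4 * lam * δ * (δ - 1) * (1 + ‖x‖ ^ 2) ^ (δ - 2)) * (x i * x j) := by
  have h0 : (0:ℝ) < 1 + ‖x‖ ^ 2 := by positivity
  funext i j
  show fderiv ℝ _ x (EuclideanSpace.single i 1) = _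
  rw [fderiv_apply_step1 lam δ j]
  have h1 : HasFDerivAt (fun z : EuclideanSpace ℝ (Fin n) => 1 + ‖z‖ ^ 2)
      (2 • (innerSL ℝ x)) x := ((hasStrictFDerivAt_norm_sq x).hasFDerivAt).const_add 1
  have h2 : HasFDerivAt (fun z : EuclideanSpace ℝ (Fin n) => (1 + ‖z‖ ^ 2) ^ (δ - 1))
      (((δ - 1) * (1 + ‖x‖ ^ 2) ^ (δ - 1 - 1)) • (2 • (innerSL ℝ x))) x :=
    h1.rpow_const (Or.inl h0.ne')
  have h3 : HasFDerivAt (fun z : EuclideanSpace ℝ (Fin n) => z j)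
      (EuclideanSpace.proj (𝕜 := ℝ) j) x := (EuclideanSpace.proj (𝕜 := ℝ) j).hasFDerivAt
  have h4 : HasFDerivAt (fun y : EuclideanSpace ℝ (Fin n) => 2 * lam * δ * ((1 + ‖y‖ ^ 2) ^ (δ - 1) * y j)) _ x :=
    ((h2.mul h3).const_mul (2 * lam * δ))
  rw [h4.fderiv]
  have : δ - 1 - 1 = δ - 2 := by ring
  simp [EuclideanSpace.inner_single_right, real_inner_comm, EuclideanSpace.single_apply, this,
    Matrix.of_apply]
  have hij : (if j = i then 2*lam*δ*(1+‖x‖^2)^(δ-1) else 0) = (if i = j then 2*lam*δ*(1+‖x‖^2)^(δ-1) else (0:ℝ)) := by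
    simp [eq_comm]
  rw [hij]
  ring

lemma norm_sq_sum {n : ℕ} (x : EuclideanSpace ℝ (Fin n)) : ∑ i, x i ^ 2 = ‖x‖ ^ 2 := by
  rw [PiLp.norm_sq_eq_of_L2]
  simp [sq_abs]

lemma main_calc {n : ℕ} (lam δ : ℝ) (hlam : 0 < lam) (hδ : 0 < δ)
    (x : EuclideanSpace ℝ (Fin n)) :
    (hess (fun y => lam * (1 + ‖y‖ ^ 2) ^ δ) x).det
      = (lam ^ n * (1 + ‖x‖ ^ 2) ^ ((δ - 1) * (n : ℝ)))
        * ((2 * δ) ^ n * ((1 + (2 * δ - 1) * ‖x‖ ^ 2) / (1 + ‖x‖ ^ 2))) := by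
  set s := ‖x‖ ^ 2 with hs
  have hs0 : 0 ≤ s := by positivity
  have ht : (0:ℝ) < 1 + s := by positivity
  have hT1 : (0:ℝ) < (1 + s) ^ (δ - 1) := Real.rpow_pos_of_pos ht _
  have hc : 2 * lam * δ * (1 + s) ^ (δ - 1) ≠ 0 := by positivity
  have hstep : hess (fun y => lam * (1 + ‖y‖ ^ 2) ^ δ) x
      = Matrix.of fun i j =>
          (2 * lam * δ * (1 + s) ^ (δ - 1)) * (if i = j then 1 else 0)
          + (4 * lam * δ * (δ - 1) * (1 + s) ^ (δ - 2)) * (x i * x j) := hess_eq lam δ x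
  rw [hstep, mydet n _ _ hc x]
  rw [norm_sq_sum x, ← hs]
  have h2 : (1 + s) ^ (δ - 2) = (1 + s) ^ (δ - 1) / (1 + s) := by
    rw [show δ - 2 = (δ - 1) - 1 by ring, Real.rpow_sub_one ht.ne']
  have hfrac : 4 * lam * δ * (δ - 1) * (1 + s) ^ (δ - 2) / (2 * lam * δ * (1 + s) ^ (δ - 1))
      = 2 * (δ - 1) / (1 + s) := by
    rw [h2]; field_simp; ring
  rw [hfrac]
  have h3 : 1 + 2 * (δ - 1) / (1 + s) * s = (1 + (2 * δ - 1) * s) / (1 + s) := by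
    field_simp; ring
  rw [h3]
  have h4 : (2 * lam * δ * (1 + s) ^ (δ - 1)) ^ n
      = lam ^ n * (1 + s) ^ ((δ - 1) * (n : ℝ)) * (2 * δ) ^ n := by
    rw [Real.rpow_mul ht.le, Real.rpow_natCast, ← mul_pow, ← mul_pow]
    ring
  rw [h4]; ring

lemma rhs_calc {n : ℕ} (lam p γ δ : ℝ) (hlam : 0 < lam)
    (hkey : δ * (p - 1) - γ = (δ - 1) * (n : ℝ)) (x : EuclideanSpace ℝ (Fin n)) :
    (1 + ‖x‖ ^ 2) ^ (-γ) * (lam * (1 + ‖x‖ ^ 2) ^ δ) ^ (p - 1)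
      = (lam ^ n * (1 + ‖x‖ ^ 2) ^ ((δ - 1) * (n : ℝ))) * lam ^ (p - 1 - (n : ℝ)) := by
  set s := ‖x‖ ^ 2 with hsdef
  have ht : (0:ℝ) < 1 + s := by positivity
  have h1 : (lam * (1 + s) ^ δ) ^ (p - 1) = lam ^ (p - 1) * (1 + s) ^ (δ * (p - 1)) := by
    rw [Real.mul_rpow hlam.le (Real.rpow_nonneg ht.le _), ← Real.rpow_mul ht.le]
  have h2 : (1 + s) ^ (-γ) * (1 + s) ^ (δ * (p - 1)) = (1 + s) ^ ((δ - 1) * (n : ℝ)) := by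
    rw [← Real.rpow_add ht]
    congr 1
    linarith [hkey]
  have h3 : lam ^ (p - 1) = (lam : ℝ) ^ n * lam ^ (p - 1 - (n : ℝ)) := by
    rw [← Real.rpow_natCast lam n, ← Real.rpow_add hlam]
    congr 1
    ring
  rw [h1, h3, ← h2]
  ring

/-- sub- and supersolution property of `w_λ(x) = λ(1+‖x‖²)^δ` for the equation
`det D²w = (1+‖x‖²)^{-γ} w^{p-1}`, `p > n+1`. -/
theorem stmt11 (n : ℕ) (hn : 1 ≤ n) (p q γ δ C₁ C₂ : ℝ)
    (hp : (n : ℝ) + 1 < p) (hq0 : 0 < q) (hq1 : q < 1)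
    (hγ : γ = ((n : ℝ) + p + 1) / 2 - q) (hδ : δ = (γ - (n : ℝ)) / (p - (n : ℝ) - 1))
    (hC₁ : C₁ = (2 * δ) ^ n * min 1 (2 * δ - 1))
    (hC₂ : C₂ = (2 * δ) ^ n * max 1 (2 * δ - 1)) :
    1 / 2 < δ ∧
    ∀ lam : ℝ, 0 < lam →
      ((C₂ ≤ lam ^ (p - 1 - (n : ℝ))) →
        ∀ x : EuclideanSpace ℝ (Fin n),
          (hess (fun y => lam * (1 + ‖y‖ ^ 2) ^ δ) x).det
            ≤ (1 + ‖x‖ ^ 2) ^ (-γ) * (lam * (1 + ‖x‖ ^ 2) ^ δ) ^ (p - 1)) ∧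
      ((lam ^ (p - 1 - (n : ℝ)) ≤ C₁) →
        ∀ x : EuclideanSpace ℝ (Fin n),
          (1 + ‖x‖ ^ 2) ^ (-γ) * (lam * (1 + ‖x‖ ^ 2) ^ δ) ^ (p - 1)
            ≤ (hess (fun y => lam * (1 + ‖y‖ ^ 2) ^ δ) x).det) := by
  have hn1 : (0:ℝ) < p - (n : ℝ) - 1 := by linarith
  have hδhalf : 1 / 2 < δ := by
    rw [hδ, hγ, lt_div_iff₀ hn1]
    linarith
  have hδpos : 0 < δ := lt_trans (by norm_num) hδhalf
  have hkey : δ * (p - 1) - γ = (δ - 1) * (n : ℝ) := by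
    have h : δ * (p - (n : ℝ) - 1) = γ - (n : ℝ) := by
      rw [hδ]; field_simp
    linear_combination h
  refine ⟨hδhalf, fun lam hlam => ⟨?_, ?_⟩⟩
  · intro hC x
    rw [main_calc lam δ hlam hδpos x, rhs_calc lam p γ δ hlam hkey x]
    have hs0 : (0:ℝ) ≤ ‖x‖ ^ 2 := by positivity
    have ht : (0:ℝ) < 1 + ‖x‖ ^ 2 := by positivity
    have hA : (0:ℝ) < lam ^ n * (1 + ‖x‖ ^ 2) ^ ((δ - 1) * (n : ℝ)) := by positivity
    rw [mul_le_mul_iff_right₀ hA]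
    refine le_trans ?_ hC
    rw [hC₂]
    apply mul_le_mul_of_nonneg_left _ (by positivity)
    rw [div_le_iff₀ ht]
    have h1 := le_max_left (1:ℝ) (2 * δ - 1)
    have h2 := le_max_right (1:ℝ) (2 * δ - 1)
    nlinarith
  · intro hC x
    rw [main_calc lam δ hlam hδpos x, rhs_calc lam p γ δ hlam hkey x]
    have hs0 : (0:ℝ) ≤ ‖x‖ ^ 2 := by positivity
    have ht : (0:ℝ) < 1 + ‖x‖ ^ 2 := by positivity
    have hA : (0:ℝ) < lam ^ n * (1 + ‖x‖ ^ 2) ^ ((δ - 1) * (n : ℝ)) := by positivity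
    rw [mul_le_mul_iff_right₀ hA]
    refine le_trans hC ?_
    rw [hC₁]
    apply mul_le_mul_of_nonneg_left _ (by positivity)
    rw [le_div_iff₀ ht]
    have h1 := min_le_left (1:ℝ) (2 * δ - 1)
    have h2 := min_le_right (1:ℝ) (2 * δ - 1)
    nlinarith
end

section
/- Let n ≥ 1 and let u : ℝⁿ → ℝ be a convex, differentiable function such that the gradient map ∇u : ℝⁿ → ℝⁿ is surjective. Then u(x)/‖x‖ → ∞ as ‖x‖ → ∞. -/
open MeasureTheory Metric Set Filter

open scoped RealInnerProductSpace

variable {E : Type*} [NormedAddCommGroup E] [InnerProductSpace ℝ E] [CompleteSpace E]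

lemma grad_ineq (u : E → ℝ) (hc : ConvexOn ℝ Set.univ u) (hd : Differentiable ℝ u) (x y : E) :
    u y + ⟪gradient u y, x - y⟫ ≤ u x := by
  set g : ℝ → ℝ := fun t => u (AffineMap.lineMap y x t) with hg
  have hgc : ConvexOn ℝ Set.univ g := by
    have := hc.comp_affineMap (AffineMap.lineMap y x)
    simpa [hg, Function.comp_def] using this
  have hderiv : HasDerivAt g (⟪gradient u y, x - y⟫) 0 := by
    have h1 : HasFDerivAt u ((InnerProductSpace.toDual ℝ E) (gradient u y)) y :=
      (hd y).hasGradientAt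
    have h2 : HasDerivAt (fun t : ℝ => AffineMap.lineMap y x t) (x - y) 0 := by
      have : HasDerivAt (fun t : ℝ => t • (x - y) + y) ((1 : ℝ) • (x - y)) 0 :=
        ((hasDerivAt_id 0).smul_const (x - y)).add_const y
      simpa [AffineMap.lineMap_apply, one_smul, add_comm, vsub_eq_sub] using this
    have h0 : AffineMap.lineMap y x (0 : ℝ) = y := by simp
    rw [← h0] at h1
    have := h1.comp_hasDerivAt (x := (0:ℝ)) h2
    simpa [hg, InnerProductSpace.toDual_apply_apply, Function.comp_def] using this
  have hslope := hgc.le_slope_of_hasDerivAt (Set.mem_univ 0) (Set.mem_univ 1)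
    one_pos hderiv
  have h01 : slope g 0 1 = g 1 - g 0 := by simp [slope_def_field]
  have hg0 : g 0 = u y := by simp [hg]
  have hg1 : g 1 = u x := by simp [hg]
  rw [h01, hg0, hg1] at hslope
  linarith

/-- a convex differentiable function on `ℝⁿ` whose gradient map is surjective
is superlinear: `u(x)/‖x‖ → ∞` as `‖x‖ → ∞`. -/
theorem stmt12 (n : ℕ) (hn : 1 ≤ n) (u : EuclideanSpace ℝ (Fin n) → ℝ)
    (huconv : ConvexOn ℝ univ u) (hud : Differentiable ℝ u)
    (hsurj : Function.Surjective (fun x => gradient u x)) :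
    Tendsto (fun x => u x / ‖x‖) (cocompact (EuclideanSpace ℝ (Fin n))) atTop := by
  let E := EuclideanSpace ℝ (Fin n)
  choose y hy using hsurj
  simp only [] at hy
  rw [Filter.tendsto_atTop]
  intro b
  set M : ℝ := max b 0 + 1 with hM
  have hM0 : 0 < M := by positivity
  -- compact sphere of radius 2M
  have hS : IsCompact (sphere (0 : E) (2 * M)) := isCompact_sphere _ _
  obtain ⟨t, hts, htfin, htcov⟩ := hS.elim_finite_subcover_image
    (fun v (_ : v ∈ sphere (0:E) (2*M)) => isOpen_ball (x := v) (ε := M))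
    (fun v hv => mem_biUnion hv (mem_ball_self hM0))
  obtain ⟨C, hC⟩ : ∃ C : ℝ, ∀ v ∈ t, C ≤ u (y v) - ⟪v, y v⟫ := by
    rcases htfin.toFinset.eq_empty_or_nonempty with h | h
    · exact ⟨0, fun v hv => absurd (htfin.mem_toFinset.2 hv) (by simp [h])⟩
    · exact ⟨htfin.toFinset.inf' h (fun v => u (y v) - ⟪v, y v⟫),
        fun v hv => Finset.inf'_le _ (htfin.mem_toFinset.2 hv)⟩
  -- eventually
  refine eventually_iff_exists_mem.2 ⟨(closedBall (0:E) (max 1 |C|))ᶜ,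
    mem_cocompact.2 ⟨closedBall 0 (max 1 |C|), isCompact_closedBall _ _, subset_rfl⟩, ?_⟩
  intro x hx
  rw [mem_compl_iff, mem_closedBall, not_le, dist_zero_right] at hx
  have hx1 : (1:ℝ) < ‖x‖ := lt_of_le_of_lt (le_max_left _ _) hx
  have hx0 : (0:ℝ) < ‖x‖ := by linarith
  have hxC : |C| < ‖x‖ := lt_of_le_of_lt (le_max_right _ _) hx
  -- rescale x to the sphere
  set w : E := (2 * M / ‖x‖) • x with hw
  have hwS : w ∈ sphere (0 : E) (2 * M) := by
    show ‖(2 * M / ‖x‖) • x - 0‖ = 2 * M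
    simp only [mem_sphere_iff_norm, sub_zero, hw, norm_smul, Real.norm_eq_abs,
      abs_of_pos (by positivity : (0:ℝ) < 2 * M / ‖x‖)]
    field_simp
  obtain ⟨v, hvt, hvball⟩ := mem_iUnion₂.1 (htcov hwS)
  have hvt' : v ∈ t := hvt
  have hdist : ‖v - w‖ < M := by
    rw [mem_ball, dist_comm, dist_eq_norm] at hvball
    simpa [norm_sub_rev] using hvball
  -- key inequality
  have key := grad_ineq u huconv hud x (y v)
  rw [hy v] at key
  have hinner : ⟪v, x - y v⟫ = ⟪v, x⟫ - ⟪v, y v⟫ := inner_sub_right v x (y v)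
  have hwx : ⟪w, x⟫ = 2 * M * ‖x‖ := by
    rw [hw, real_inner_smul_left, real_inner_self_eq_norm_sq]
    field_simp
  have hvx : 2 * M * ‖x‖ - M * ‖x‖ ≤ ⟪v, x⟫ := by
    have h1 : ⟪v, x⟫ = ⟪w, x⟫ + ⟪v - w, x⟫ := by
      rw [← inner_add_left, add_sub_cancel]
    have h2 : |⟪v - w, x⟫| ≤ ‖v - w‖ * ‖x‖ := abs_real_inner_le_norm _ _
    have h3 : ‖v - w‖ * ‖x‖ ≤ M * ‖x‖ := by
      apply mul_le_mul_of_nonneg_right hdist.le hx0.le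
    rw [h1, hwx]
    have := neg_abs_le ⟪v - w, x⟫
    linarith
  have hCv := hC v hvt'
  have hux : C + M * ‖x‖ ≤ u x := by
    have : u (y v) + (⟪v, x⟫ - ⟪v, y v⟫) ≤ u x := by rw [← hinner]; exact key
    nlinarith
  -- conclude
  rw [le_div_iff₀ hx0]
  have hC' : -‖x‖ ≤ C := by
    have := neg_abs_le C; linarith
  have : b ≤ M - 1 := by rw [hM]; simp [le_max_left]
  nlinarith [le_max_left b 0]
end
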